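/- arXiv:1709.08158 — 6 statements merged into one kernel-verified Lean document; each statement's English description precedes it below -/
import Mathlib

section
/- There is an absolute constant C > 0 such that for all n ∈ ℕ the dispersion of the n-th Fibonacci point set satisfies disp(F_n) ≤ C / b_n. -/
/-- Fibonacci numbers with `b₀ = b₁ = 1`. -/
def fibb : ℕ → ℕ
  | 0 => 1
  | 1 => 1
  | n + 2 => fibb (n + 1) + fibb n

/-- The `n`-th Fibonacci point set
`F_n = {(μ/b_n, {μ b_{n-1}/b_n}) : μ = 1, …, b_n} ⊂ [0,1)²`. -/
noncomputable def FibSet (n : ℕ) : Set (ℝ × ℝ) :=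
  {p | ∃ μ : ℕ, 1 ≤ μ ∧ μ ≤ fibb n ∧
    p = ((μ : ℝ) / (fibb n : ℝ),
         Int.fract ((μ : ℝ) * (fibb (n - 1) : ℝ) / (fibb n : ℝ)))}

lemma fibb_add_two (n : ℕ) : fibb (n+2) = fibb (n+1) + fibb n := rfl

lemma fibb_pos : ∀ n, 0 < fibb n
  | 0 => Nat.one_pos
  | 1 => Nat.one_pos
  | n+2 => by rw [fibb_add_two]; exact Nat.lt_of_lt_of_le (fibb_pos (n+1)) (Nat.le_add_right _ _)

lemma fibb_le_succ (n : ℕ) : fibb n ≤ fibb (n+1) := by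
  cases n with
  | zero => exact le_refl _
  | succ m => rw [fibb_add_two]; exact Nat.le_add_right _ _

lemma fibb_mono : Monotone fibb := monotone_nat_of_le_succ fibb_le_succ

lemma fibb_succ_le (n : ℕ) : fibb (n+1) ≤ 2 * fibb n := by
  cases n with
  | zero => norm_num [fibb]
  | succ m => rw [fibb_add_two, two_mul]; exact Nat.add_le_add_left (fibb_le_succ m) _

lemma fibb_prod (p : ℕ) : ∀ q : ℕ, fibb (p+q+2) = fibb (p+1) * fibb (q+1) + fibb p * fibb q := by
  intro q
  induction q using Nat.twoStepInduction with
  | zero => simp [fibb_add_two, fibb]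
  | one =>
    rw [show p+1+2 = (p+1)+2 from rfl, fibb_add_two (p+1), show p+1+1=p+2 from rfl, fibb_add_two p]
    simp [fibb]; ring
  | more q ih1 ih2 =>
    rw [show p+(q+2)+2 = (p+q+2)+2 by ring, fibb_add_two, show p+q+2+1 = p+(q+1)+2 by ring,
      ih2, ih1, show q+1+1 = q+2 from rfl, fibb_add_two (q+1), fibb_add_two q]
    ring

lemma fibb_mul_le : ∀ p q : ℕ, fibb p * fibb q ≤ fibb (p+q)
  | 0, q => by simp [fibb]
  | p+1, 0 => by simp [fibb]
  | p+1, q+1 => by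
      rw [show p+1+(q+1) = p+q+2 by ring, fibb_prod]
      exact Nat.le_add_right _ _

lemma cong : ∀ k j : ℕ,
    ((fibb (j+k+1) : ℤ)) ∣ (fibb (j+k) : ℤ) * (fibb k : ℤ) - (-1)^k * (fibb j : ℤ) := by
  intro k
  induction k using Nat.twoStepInduction with
  | zero => intro j; simp [fibb]
  | one =>
    intro j
    have h : (fibb (j+1) : ℤ) * (fibb 1 : ℤ) - (-1)^1 * (fibb j : ℤ) = (fibb (j+2) : ℤ) := by
      rw [fibb_add_two]; push_cast [show fibb 1 = 1 from rfl]; ring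
    rw [h]
  | more k ih1 ih2 =>
    intro j
    have h1 := ih2 (j+1)
    have h2 := ih1 (j+2)
    rw [show (j+1)+(k+1)+1 = j+(k+2)+1 by ring, show (j+1)+(k+1) = j+(k+2) by ring] at h1
    rw [show (j+2)+k+1 = j+(k+2)+1 by ring, show (j+2)+k = j+(k+2) by ring] at h2
    have hsum := dvd_add h1 h2
    have heq : ((fibb (j+(k+2)) : ℤ) * (fibb (k+1) : ℤ) - (-1)^(k+1) * (fibb (j+1) : ℤ))
        + ((fibb (j+(k+2)) : ℤ) * (fibb k : ℤ) - (-1)^k * (fibb (j+2) : ℤ))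
        = (fibb (j+(k+2)) : ℤ) * (fibb (k+2) : ℤ) - (-1)^(k+2) * (fibb j : ℤ) := by
      rw [fibb_add_two k, fibb_add_two j]
      push_cast
      ring
    rwa [heq] at hsum

lemma dense (n : ℕ) : ∀ k, k ≤ n → ∀ c : ℤ, ∃ μ : ℤ, |μ| ≤ (fibb (k+1) : ℤ) - 1 ∧
    (c + μ * (fibb (n-1) : ℤ)) % (fibb n : ℤ) < fibb (n - k) := by
  have hN0 : (0:ℤ) < (fibb n : ℤ) := by exact_mod_cast fibb_pos n
  intro k
  induction k with
  | zero =>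
    intro _ c
    refine ⟨0, by norm_num [show fibb 1 = 1 from rfl], ?_⟩
    simpa using Int.emod_lt_of_pos (c + 0 * (fibb (n-1):ℤ)) hN0
  | succ k ih =>
    intro hk c
    obtain ⟨μ₀, hμ₀, hr⟩ := ih (by omega) c
    have hfk2 : (fibb (k+1) : ℤ) ≤ (fibb (k+2) : ℤ) := by
      exact_mod_cast fibb_mono (show k+1 ≤ k+2 by omega)
    rw [show k+1+1 = k+2 by omega]
    by_cases hsmall : (c + μ₀ * (fibb (n-1):ℤ)) % (fibb n : ℤ) < (fibb (n-(k+1)) : ℤ)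
    · exact ⟨μ₀, by omega, hsmall⟩
    push_neg at hsmall
    have hr0 : 0 ≤ (c + μ₀ * (fibb (n-1):ℤ)) % (fibb n:ℤ) := Int.emod_nonneg _ hN0.ne'
    have hrN : (c + μ₀ * (fibb (n-1):ℤ)) % (fibb n:ℤ) < (fibb n : ℤ) := Int.emod_lt_of_pos _ hN0
    have hnk2 : k + 2 ≤ n := by
      by_contra h
      have hn1 : n = k+1 := by omega
      rw [hn1] at hsmall hr
      rw [show k+1-(k+1) = 0 by omega] at hsmall
      rw [show k+1-k = 1 by omega] at hr
      simp only [show fibb 0 = 1 from rfl, show fibb 1 = 1 from rfl] at hsmall hr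
      omega
    obtain ⟨m', rfl⟩ : ∃ m', n = k + m' + 2 := ⟨n-k-2, by omega⟩
    simp only [show k+m'+2-1 = k+m'+1 by omega, show k+m'+2-k = m'+2 by omega,
      show k+m'+2-(k+1) = m'+1 by omega] at hr hsmall hr0 hrN ⊢
    set r : ℤ := (c + μ₀ * (fibb (k+m'+1):ℤ)) % (fibb (k+m'+2):ℤ) with hrdef
    have hd := cong k (m'+1)
    rw [show (m'+1)+k+1 = k+m'+2 by omega, show (m'+1)+k = k+m'+1 by omega] at hd
    have e1 : c + μ₀ * (fibb (k+m'+1):ℤ) ≡ r [ZMOD (fibb (k+m'+2):ℤ)] := by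
      show _ % _ = r % _
      rw [hrdef]
      exact (Int.emod_emod_of_dvd _ dvd_rfl).symm
    have hcadd : (fibb (k+2):ℤ) = (fibb (k+1):ℤ) + (fibb k:ℤ) := by
      exact_mod_cast fibb_add_two k
    have hfkpos : (0:ℤ) ≤ (fibb k : ℤ) := by positivity
    have hstep : ∃ μ : ℤ, |μ| ≤ (fibb (k+2) : ℤ) - 1 ∧
        c + μ * (fibb (k+m'+1):ℤ) ≡ r - (fibb (m'+1) : ℤ) [ZMOD (fibb (k+m'+2) : ℤ)] := by
      rcases Nat.even_or_odd k with hke | hko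
      · rw [hke.neg_one_pow, one_mul] at hd
        have e2 : (fibb (k+m'+1):ℤ) * (fibb k : ℤ) ≡ (fibb (m'+1) : ℤ)
            [ZMOD (fibb (k+m'+2) : ℤ)] := (Int.modEq_iff_dvd.mpr hd).symm
        refine ⟨μ₀ - (fibb k : ℤ), ?_, ?_⟩
        · have h1 : |μ₀ - (fibb k:ℤ)| ≤ |μ₀| + (fibb k:ℤ) := by
            calc |μ₀ - (fibb k:ℤ)| = |μ₀ + (-(fibb k:ℤ))| := by rw [sub_eq_add_neg]
              _ ≤ |μ₀| + |(-(fibb k:ℤ))| := abs_add_le _ _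
              _ = |μ₀| + (fibb k:ℤ) := by rw [abs_neg, abs_of_nonneg hfkpos]
          omega
        · have e3 := e1.sub e2
          have heq : c + (μ₀ - (fibb k : ℤ)) * (fibb (k+m'+1):ℤ)
              = (c + μ₀ * (fibb (k+m'+1):ℤ)) - (fibb (k+m'+1):ℤ) * (fibb k : ℤ) := by ring
          rw [heq]
          exact e3
      · rw [hko.neg_one_pow] at hd
        have e2 : (fibb (k+m'+1):ℤ) * (fibb k : ℤ) ≡ -(fibb (m'+1) : ℤ)
            [ZMOD (fibb (k+m'+2) : ℤ)] := by
          refine (Int.modEq_iff_dvd.mpr ?_).symm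
          have heq : (fibb (k+m'+1):ℤ) * (fibb k:ℤ) - -(fibb (m'+1):ℤ)
              = (fibb (k+m'+1):ℤ) * (fibb k:ℤ) - -1 * (fibb (m'+1):ℤ) := by ring
          rw [heq]
          exact hd
        refine ⟨μ₀ + (fibb k : ℤ), ?_, ?_⟩
        · have h1 : |μ₀ + (fibb k:ℤ)| ≤ |μ₀| + (fibb k:ℤ) := by
            calc |μ₀ + (fibb k:ℤ)| ≤ |μ₀| + |(fibb k:ℤ)| := abs_add_le _ _
              _ = |μ₀| + (fibb k:ℤ) := by rw [abs_of_nonneg hfkpos]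
          omega
        · have e3 := e1.add e2
          have heq : c + (μ₀ + (fibb k : ℤ)) * (fibb (k+m'+1):ℤ)
              = (c + μ₀ * (fibb (k+m'+1):ℤ)) + (fibb (k+m'+1):ℤ) * (fibb k : ℤ) := by ring
          rw [heq]
          have heq2 : r + -(fibb (m'+1):ℤ) = r - (fibb (m'+1):ℤ) := by ring
          rw [← heq2]
          exact e3
    obtain ⟨μ, hμb, hμe⟩ := hstep
    refine ⟨μ, hμb, ?_⟩
    have hf2 : (fibb (m'+2) : ℤ) = (fibb (m'+1) : ℤ) + (fibb m' : ℤ) := by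
      exact_mod_cast fibb_add_two m'
    have hmono : (fibb m' : ℤ) ≤ (fibb (m'+1) : ℤ) := by exact_mod_cast fibb_le_succ m'
    have hv0 : (0:ℤ) ≤ r - (fibb (m'+1) : ℤ) := by omega
    have hvN : r - (fibb (m'+1) : ℤ) < (fibb (k+m'+2) : ℤ) := by omega
    have hee : (c + μ * (fibb (k+m'+1):ℤ)) % (fibb (k+m'+2):ℤ)
        = (r - (fibb (m'+1):ℤ)) % (fibb (k+m'+2):ℤ) := hμe
    rw [hee, Int.emod_eq_of_lt hv0 hvN]
    omega

lemma fract_int_div (w : ℤ) (N : ℕ) (hN : 0 < N) :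
    Int.fract ((w : ℝ) / (N : ℝ)) = ((w % (N:ℤ) : ℤ) : ℝ) / (N : ℝ) := by
  have hNr : (0:ℝ) < (N:ℝ) := by exact_mod_cast hN
  have h : ((w / (N:ℤ)) * (N:ℤ) + w % (N:ℤ) : ℤ) = w := by
    rw [mul_comm]; exact Int.mul_ediv_add_emod w N
  have key : (w:ℝ)/(N:ℝ) = ((w / (N:ℤ) : ℤ):ℝ) + ((w % (N:ℤ) : ℤ):ℝ)/(N:ℝ) := by
    field_simp
    exact_mod_cast (by linarith [h] : w = (N:ℤ) * (w / (N:ℤ)) + w % (N:ℤ))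
  rw [key, Int.fract_intCast_add, Int.fract_eq_self.mpr]
  constructor
  · apply div_nonneg _ hNr.le
    exact_mod_cast Int.emod_nonneg w (by exact_mod_cast hN.ne')
  · rw [div_lt_one hNr]
    exact_mod_cast Int.emod_lt_of_pos w (by exact_mod_cast hN)

set_option maxHeartbeats 2000000 in
/-- There is an absolute constant `C > 0` such that for all `n` the dispersion of the
`n`-th Fibonacci point set satisfies `disp(F_n) ≤ C / b_n`, i.e. every axis-parallel box
`[x₁,y₁) × [x₂,y₂) ⊆ [0,1)²` containing no point of `F_n` has volume at most `C / b_n`. -/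
theorem fibonacci_dispersion :
    ∃ C : ℝ, 0 < C ∧ ∀ n : ℕ, ∀ x y : ℝ × ℝ,
      0 ≤ x.1 → 0 ≤ x.2 → x.1 < y.1 → x.2 < y.2 → y.1 ≤ 1 → y.2 ≤ 1 →
      (∀ p ∈ FibSet n, ¬ (x.1 ≤ p.1 ∧ p.1 < y.1 ∧ x.2 ≤ p.2 ∧ p.2 < y.2)) →
      (y.1 - x.1) * (y.2 - x.2) ≤ C / (fibb n : ℝ) := by
  refine ⟨32, by norm_num, ?_⟩
  intro n x y hx1 hx2 hxy1 hxy2 hy1 hy2 hemp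
  have hN0 : 0 < fibb n := fibb_pos n
  have hNr : (0:ℝ) < (fibb n : ℝ) := by exact_mod_cast hN0
  rw [le_div_iff₀ hNr]
  have main : ((y.1 - x.1) * (fibb n : ℝ)) * ((y.2 - x.2) * (fibb n : ℝ)) ≤ 32 * (fibb n : ℝ) := by
    set z1 : ℤ := ⌈x.1 * (fibb n:ℝ)⌉ with hz1
    set cc : ℤ := max z1 1 with hcc
    set e1 : ℤ := ⌈y.1 * (fibb n:ℝ)⌉ with he1
    have hcp : 1 ≤ cc := by rw [hcc]; exact le_max_right _ _
    have hcR : x.1 * (fibb n:ℝ) ≤ (cc:ℝ) := by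
      refine le_trans (Int.le_ceil _) ?_
      exact_mod_cast le_max_left z1 1
    have hcR2 : (cc:ℝ) ≤ x.1*(fibb n:ℝ) + 1 := by
      rw [hcc]
      push_cast
      apply max_le
      · exact (Int.ceil_lt_add_one _).le
      · linarith [mul_nonneg hx1 hNr.le]
    have he1R : y.1 * (fibb n:ℝ) ≤ (e1:ℝ) := Int.le_ceil _
    have he1R2 : (e1:ℝ) < y.1*(fibb n:ℝ) + 1 := Int.ceil_lt_add_one _
    have he1N : e1 ≤ (fibb n : ℤ) := by
      rw [he1]
      apply Int.ceil_le.mpr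
      push_cast
      calc y.1 * (fibb n:ℝ) ≤ 1 * (fibb n:ℝ) := mul_le_mul_of_nonneg_right hy1 hNr.le
        _ = (fibb n:ℝ) := one_mul _
    clear_value z1 cc e1
    have hvle : (y.2 - x.2) * (fibb n:ℝ) ≤ (fibb n:ℝ) := by
      calc (y.2 - x.2) * (fibb n:ℝ) ≤ 1 * (fibb n:ℝ) :=
            mul_le_mul_of_nonneg_right (by linarith) hNr.le
        _ = (fibb n:ℝ) := one_mul _
    have hupos : (0:ℝ) < (y.1 - x.1) * (fibb n:ℝ) := mul_pos (by linarith) hNr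
    have hvpos : (0:ℝ) < (y.2 - x.2) * (fibb n:ℝ) := mul_pos (by linarith) hNr
    by_cases hM : e1 - cc ≤ 0
    · have hec : (e1:ℝ) ≤ (cc:ℝ) := by exact_mod_cast (by omega : e1 ≤ cc)
      have hu1 : (y.1 - x.1) * (fibb n:ℝ) ≤ 1 := by
        calc (y.1 - x.1) * (fibb n:ℝ) = y.1*(fibb n:ℝ) - x.1*(fibb n:ℝ) := by ring
          _ ≤ 1 := by linarith
      have h1 : ((y.1-x.1)*(fibb n:ℝ))*((y.2-x.2)*(fibb n:ℝ))
          ≤ 1*((y.2-x.2)*(fibb n:ℝ)) := mul_le_mul_of_nonneg_right hu1 hvpos.le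
      have h2 : (1:ℝ)*((y.2-x.2)*(fibb n:ℝ)) = (y.2-x.2)*(fibb n:ℝ) := one_mul _
      linarith
    push_neg at hM
    set M' : ℕ := (e1 - cc).toNat with hM'
    have hM'c : (M' : ℤ) = e1 - cc := by rw [hM']; exact Int.toNat_of_nonneg (by omega)
    clear_value M'
    have hM'1 : 1 ≤ M' := by omega
    have hM'N : (M':ℤ) < (fibb n : ℤ) := by omega
    have hM'Nn : M' < fibb n := by exact_mod_cast hM'N
    set k : ℕ := Nat.findGreatest (fun k => fibb k ≤ M') n with hkdef
    have hk0 : fibb k ≤ M' := by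
      rw [hkdef]
      exact Nat.findGreatest_spec (P := fun k => fibb k ≤ M') (m := 0) (Nat.zero_le n)
        (by simpa [show fibb 0 = 1 from rfl] using hM'1)
    have hkn : k ≤ n := by rw [hkdef]; exact Nat.findGreatest_le n
    have hklt : k < n := by
      rcases lt_or_eq_of_le hkn with h | h
      · exact h
      · rw [h] at hk0; omega
    have hk2 : M' < fibb (k+1) := by
      by_contra h
      push_neg at h
      have h5 := Nat.le_findGreatest (P := fun k => fibb k ≤ M') (show k+1 ≤ n from hklt) h
      rw [← hkdef] at h5
      omega
    clear_value k
    have hu : (y.1-x.1)*(fibb n:ℝ) ≤ (fibb (k+1) : ℝ) := by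
      have h1 : ((M':ℕ):ℝ) = (e1:ℝ) - (cc:ℝ) := by exact_mod_cast hM'c
      have h2 : (M':ℝ) + 1 ≤ (fibb (k+1):ℝ) := by exact_mod_cast hk2
      linarith
    by_cases hk3 : k < 3
    · have hf : (fibb (k+1):ℝ) ≤ 3 := by
        have h1 : fibb (k+1) ≤ fibb 3 := fibb_mono (by omega)
        have h3 : fibb 3 = 3 := rfl
        exact_mod_cast h3 ▸ h1
      have h1 : ((y.1-x.1)*(fibb n:ℝ))*((y.2-x.2)*(fibb n:ℝ))
          ≤ (fibb (k+1):ℝ)*((y.2-x.2)*(fibb n:ℝ)) := mul_le_mul_of_nonneg_right hu hvpos.le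
      have h2 : (fibb (k+1):ℝ)*((y.2-x.2)*(fibb n:ℝ)) ≤ 3*((y.2-x.2)*(fibb n:ℝ)) :=
        mul_le_mul_of_nonneg_right hf hvpos.le
      have h3' : (3:ℝ)*((y.2-x.2)*(fibb n:ℝ)) ≤ 3*(fibb n:ℝ) := by linarith
      linarith
    push_neg at hk3
    obtain ⟨j, hkj⟩ : ∃ j, k = j + 3 := ⟨k - 3, by omega⟩
    have hjn : j ≤ n := by omega
    set z2 : ℤ := ⌈x.2 * (fibb n:ℝ)⌉ with hz2
    have hz20 : 0 ≤ z2 := by rw [hz2]; exact Int.ceil_nonneg (by positivity)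
    have hz2R : x.2 * (fibb n:ℝ) ≤ (z2:ℝ) := by rw [hz2]; exact Int.le_ceil _
    have hz2R2 : (z2:ℝ) < x.2*(fibb n:ℝ) + 1 := by rw [hz2]; exact Int.ceil_lt_add_one _
    clear_value z2
    set c0 : ℤ := cc + ((fibb (j+1) : ℤ) - 1) with hc0
    clear_value c0
    obtain ⟨μ, hμb, hμr⟩ := dense n j hjn (c0 * (fibb (n-1):ℤ) - z2)
    set r : ℤ := (c0 * (fibb (n-1):ℤ) - z2 + μ * (fibb (n-1):ℤ)) % (fibb n : ℤ) with hrdef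
    clear_value r
    have hr0 : 0 ≤ r := by rw [hrdef]; exact Int.emod_nonneg _ (by exact_mod_cast hN0.ne')
    obtain ⟨hμlo, hμhi⟩ := abs_le.mp hμb
    have hwin : 2 * fibb (j+1) ≤ fibb (j+3) := by
      rw [show j+3 = (j+1)+2 by omega, fibb_add_two]
      have := fibb_le_succ (j+1)
      omega
    set μt : ℤ := c0 + μ with hμtdef
    clear_value μt
    have hμt1 : 1 ≤ μt := by
      rw [hμtdef]
      have : (0:ℤ) ≤ (fibb (j+1):ℤ) - 1 := by
        have := fibb_pos (j+1); omega
      omega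
    have hμtub : μt ≤ e1 - 1 := by
      have hw : (2 * fibb (j+1) : ℤ) ≤ (fibb (j+3) : ℤ) := by exact_mod_cast hwin
      have hk0' : (fibb (j+3) : ℤ) ≤ (M' : ℤ) := by rw [← hkj]; exact_mod_cast hk0
      omega
    set μn : ℕ := μt.toNat with hμn
    have hμnc : (μn:ℤ) = μt := by rw [hμn]; exact Int.toNat_of_nonneg (by omega)
    clear_value μn
    have hμn1 : 1 ≤ μn := by omega
    have hμnN : μn ≤ fibb n := by omega
    set rem : ℤ := (μt * (fibb (n-1):ℤ)) % (fibb n : ℤ) with hremdef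
    clear_value rem
    have hrem0 : 0 ≤ rem := by rw [hremdef]; exact Int.emod_nonneg _ (by exact_mod_cast hN0.ne')
    have hremN : rem < (fibb n : ℤ) := by rw [hremdef]; exact Int.emod_lt_of_pos _ (by exact_mod_cast hN0)
    have hrel : rem = (r + z2) % (fibb n : ℤ) := by
      have e1' : c0 * (fibb (n-1):ℤ) - z2 + μ * (fibb (n-1):ℤ) ≡ r [ZMOD (fibb n : ℤ)] := by
        show _ % _ = r % _
        rw [hrdef]
        exact (Int.emod_emod_of_dvd _ dvd_rfl).symm
      have e2' := e1'.add_right z2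
      have heq : μt * (fibb (n-1):ℤ) = (c0 * (fibb (n-1):ℤ) - z2 + μ * (fibb (n-1):ℤ)) + z2 := by
        rw [hμtdef]; ring
      rw [hremdef, heq]
      exact e2'
    have hfr : Int.fract ((μn:ℝ) * (fibb (n-1):ℝ) / (fibb n:ℝ)) = ((rem:ℤ):ℝ)/(fibb n:ℝ) := by
      have hcast : ((μt * (fibb (n-1):ℤ) : ℤ):ℝ) = (μn:ℝ) * (fibb (n-1):ℝ) := by
        push_cast [← hμnc]
        ring
      rw [← hcast, fract_int_div _ _ hN0, hremdef]
    have hmem : (((μn:ℝ)/(fibb n:ℝ),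
        Int.fract ((μn:ℝ)*(fibb (n-1):ℝ)/(fibb n:ℝ))) : ℝ×ℝ) ∈ FibSet n :=
      ⟨μn, hμn1, hμnN, rfl⟩
    have hnl := hemp _ hmem
    have hc1 : x.1 ≤ (μn:ℝ)/(fibb n:ℝ) := by
      rw [le_div_iff₀ hNr]
      have h1 : (cc:ℝ) ≤ (μn:ℝ) := by exact_mod_cast (by omega : cc ≤ (μn:ℤ))
      linarith
    have hc2 : (μn:ℝ)/(fibb n:ℝ) < y.1 := by
      rw [div_lt_iff₀ hNr]
      have h1 : (μn:ℝ) ≤ (e1:ℝ) - 1 := by exact_mod_cast (by omega : (μn:ℤ) ≤ e1 - 1)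
      linarith
    have hrd : r < (fibb (n - j) : ℤ) := hμr
    have hvbound : (y.2 - x.2) * (fibb n:ℝ) < ((fibb (n-j):ℕ):ℝ) + 1 := by
      have hrdR : (r:ℝ) < ((fibb (n-j):ℕ):ℝ) := by exact_mod_cast hrd
      by_cases hw : r + z2 < (fibb n:ℤ)
      · have hremeq : rem = r + z2 := by rw [hrel]; exact Int.emod_eq_of_lt (by omega) hw
        have hremR : (rem:ℝ) = (r:ℝ) + (z2:ℝ) := by exact_mod_cast hremeq
        have hc3 : x.2 ≤ (rem:ℝ)/(fibb n:ℝ) := by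
          rw [le_div_iff₀ hNr]
          have : (z2:ℝ) ≤ (rem:ℝ) := by exact_mod_cast (by omega : z2 ≤ rem)
          linarith
        have hc4 : ¬ ((rem:ℝ)/(fibb n:ℝ) < y.2) := by
          intro hlt
          exact hnl ⟨hc1, hc2, by rw [hfr]; exact hc3, by rw [hfr]; exact hlt⟩
        push_neg at hc4
        rw [le_div_iff₀ hNr] at hc4
        linarith
      · push_neg at hw
        have hwR : (fibb n:ℝ) ≤ (r:ℝ) + (z2:ℝ) := by exact_mod_cast hw
        have hy2N : y.2 * (fibb n:ℝ) ≤ (fibb n:ℝ) := by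
          calc y.2 * (fibb n:ℝ) ≤ 1 * (fibb n:ℝ) := mul_le_mul_of_nonneg_right hy2 hNr.le
            _ = (fibb n:ℝ) := one_mul _
        linarith
    have hdn : 2 * (fibb (j+4) * fibb (n-j)) ≤ 32 * fibb n := by
      have hmul := fibb_mul_le (j+4) (n-j)
      rw [show j+4+(n-j) = n+4 by omega] at hmul
      have h16 : fibb (n+4) ≤ 16 * fibb n := by
        have h1 := fibb_succ_le (n+3)
        have h2 := fibb_succ_le (n+2)
        have h3 := fibb_succ_le (n+1)
        have h4 := fibb_succ_le n
        rw [show n+3+1 = n+4 by omega] at h1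
        rw [show n+2+1 = n+3 by omega] at h2
        rw [show n+1+1 = n+2 by omega] at h3
        omega
      have hmul2 : 2 * (fibb (j+4) * fibb (n-j)) ≤ 2 * fibb (n+4) :=
        Nat.mul_le_mul_left 2 hmul
      omega
    rw [hkj, show j+3+1 = j+4 by omega] at hu
    have hd1 : (1:ℝ) ≤ ((fibb (n-j):ℕ):ℝ) := by exact_mod_cast fibb_pos (n-j)
    have h1 : ((y.1-x.1)*(fibb n:ℝ)) * ((y.2-x.2)*(fibb n:ℝ))
        ≤ (fibb (j+4):ℝ) * (((fibb (n-j):ℕ):ℝ) + 1) :=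
      mul_le_mul hu hvbound.le hvpos.le (by positivity)
    have h3 : (fibb (j+4):ℝ) * (((fibb (n-j):ℕ):ℝ) + 1)
        ≤ (fibb (j+4):ℝ) * (2*((fibb (n-j):ℕ):ℝ)) := by
      apply mul_le_mul_of_nonneg_left (by linarith) (by positivity)
    have h4 : (fibb (j+4):ℝ) * (2*((fibb (n-j):ℕ):ℝ)) ≤ 32 * (fibb n:ℝ) := by
      have hR : (2:ℝ) * ((fibb (j+4):ℝ) * ((fibb (n-j):ℕ):ℝ)) ≤ 32 * (fibb n:ℝ) := by
        exact_mod_cast hdn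
      linarith [hR]
    linarith
  have h2 : ((y.1-x.1)*(y.2-x.2)*(fibb n:ℝ)) * (fibb n:ℝ) ≤ (32 * (fibb n:ℝ)) := by
    calc ((y.1-x.1)*(y.2-x.2)*(fibb n:ℝ)) * (fibb n:ℝ)
        = ((y.1-x.1)*(fibb n:ℝ)) * ((y.2-x.2)*(fibb n:ℝ)) := by ring
      _ ≤ _ := main
  exact le_of_mul_le_mul_right h2 hNr
end

section
/- There is an absolute constant C_3 > 0 such that: if v ∈ ℕ and u_1, u_2 > 0 satisfy u_1 u_2 ≥ 2^{-v}, then σ(v) := Σ_{(s_1,s_2) ∈ ℕ_0^2, s_1+s_2 = v} min(2^{s_1}u_1, 1/(2^{s_1}u_1)) · min(2^{s_2}u_2, 1/(2^{s_2}u_2)) ≤ C_3 · log(2^{v+1} u_1 u_2) / (2^v u_1 u_2), where log denotes the logarithm to base 2. -/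
open Finset Real

private lemma four_pow_eq (s : ℕ) : (4:ℝ)^s = ((2:ℝ)^s)^2 := by
  rw [show (4:ℝ) = 2^2 by norm_num, ← pow_mul, ← pow_mul, mul_comm]

private lemma side_sum (u : ℝ) (hu : 0 < u) (T : Finset ℕ)
    (hT : ∀ s ∈ T, (2:ℝ)^s * u < 1) : ∑ s ∈ T, (4:ℝ)^s * u^2 ≤ 4/3 := by
  rcases T.eq_empty_or_nonempty with rfl | hne
  · simp; norm_num
  · set m := T.max' hne with hm
    have hmem : m ∈ T := T.max'_mem hne
    have hsub : T ⊆ Finset.range (m+1) := by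
      intro s hs
      simp only [Finset.mem_range]
      exact Nat.lt_succ_of_le (Finset.le_max' T s hs)
    have h1 : ∑ s ∈ T, (4:ℝ)^s * u^2 ≤ ∑ s ∈ Finset.range (m+1), (4:ℝ)^s * u^2 :=
      Finset.sum_le_sum_of_subset_of_nonneg hsub (fun i _ _ => by positivity)
    have h2 : ∑ s ∈ Finset.range (m+1), (4:ℝ)^s * u^2
        = ((4:ℝ)^(m+1) - 1)/3 * u^2 := by
      rw [← Finset.sum_mul, geom_sum_eq (by norm_num)]
      norm_num
    have h3 : (4:ℝ)^m * u^2 < 1 := by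
      have hx : (0:ℝ) < 2^m * u := by positivity
      have hlt := hT m hmem
      calc (4:ℝ)^m * u^2 = ((2:ℝ)^m * u)^2 := by rw [four_pow_eq]; ring
        _ < 1 := by nlinarith
    have h5 : (0:ℝ) < 4^m := by positivity
    have h6 : (4:ℝ)^(m+1) = 4 * 4^m := by ring
    calc ∑ s ∈ T, (4:ℝ)^s * u^2 ≤ ((4:ℝ)^(m+1) - 1)/3 * u^2 := h2 ▸ h1
      _ ≤ 4/3 := by nlinarith [sq_nonneg u]


/-- There is an absolute constant `C₃ > 0` such that: if `v ∈ ℕ` (`v ≥ 1`) and `u₁, u₂ > 0`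
satisfy `u₁ u₂ ≥ 2^{-v}`, then
`σ(v) = Σ_{s₁+s₂=v} min(2^{s₁}u₁, 1/(2^{s₁}u₁)) · min(2^{s₂}u₂, 1/(2^{s₂}u₂))
  ≤ C₃ · log₂(2^{v+1} u₁ u₂) / (2^v u₁ u₂)`. -/
theorem sigma_two_dimensional_bound :
    ∃ C₃ : ℝ, 0 < C₃ ∧ ∀ v : ℕ, 1 ≤ v → ∀ u₁ u₂ : ℝ, 0 < u₁ → 0 < u₂ →
      ((2 : ℝ) ^ v)⁻¹ ≤ u₁ * u₂ →
      ∑ p ∈ Finset.HasAntidiagonal.antidiagonal v,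
          min ((2 : ℝ) ^ p.1 * u₁) (1 / ((2 : ℝ) ^ p.1 * u₁)) *
            min ((2 : ℝ) ^ p.2 * u₂) (1 / ((2 : ℝ) ^ p.2 * u₂)) ≤
        C₃ * Real.logb 2 ((2 : ℝ) ^ (v + 1) * u₁ * u₂) / ((2 : ℝ) ^ v * u₁ * u₂) := by
  refine ⟨4, by norm_num, ?_⟩
  intro v hv u₁ u₂ hu₁ hu₂ huu
  set P : ℝ := 2 ^ v * u₁ * u₂ with hPdef
  have hPpos : (0:ℝ) < P := by positivity
  have hP1 : (1:ℝ) ≤ P := by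
    have h := mul_le_mul_of_nonneg_left huu (le_of_lt (pow_pos (show (0:ℝ)<2 by norm_num) v))
    rw [mul_inv_cancel₀ (by positivity)] at h
    calc (1:ℝ) ≤ 2^v * (u₁*u₂) := h
      _ = P := by rw [hPdef]; ring
  -- product identity
  have habs : ∀ s ≤ v, ((2:ℝ)^s * u₁) * ((2:ℝ)^(v-s) * u₂) = P := by
    intro s hs
    rw [hPdef, show (2:ℝ)^v = 2^s * 2^(v-s) by rw [← pow_add]; congr 1; omega]
    ring
  -- abbreviate the summand
  set g : ℕ → ℝ := fun s => min ((2:ℝ)^s * u₁) (1/((2:ℝ)^s * u₁)) *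
      min ((2:ℝ)^(v-s) * u₂) (1/((2:ℝ)^(v-s) * u₂)) with hgdef
  have hgnn : ∀ s, 0 ≤ g s := by
    intro s
    apply mul_nonneg <;> exact le_min (by positivity) (by positivity)
  have ha_pos : ∀ s : ℕ, (0:ℝ) < 2^s * u₁ := fun s => by positivity
  have hb_pos : ∀ s : ℕ, (0:ℝ) < 2^(v-s) * u₂ := fun s => by positivity
  -- bound A : g s ≤ 4^s u₁² / P
  have hgA : ∀ s ≤ v, g s ≤ (4:ℝ)^s * u₁^2 / P := by
    intro s hs
    have h1 : g s ≤ ((2:ℝ)^s * u₁) * (1/((2:ℝ)^(v-s) * u₂)) := by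
      apply mul_le_mul (min_le_left _ _) (min_le_right _ _)
        (le_min (by positivity) (by positivity)) (le_of_lt (ha_pos s))
    refine h1.trans (le_of_eq ?_)
    rw [← habs s hs, four_pow_eq]
    field_simp
  have hgB : ∀ s ≤ v, g s ≤ (4:ℝ)^(v-s) * u₂^2 / P := by
    intro s hs
    have h1 : g s ≤ (1/((2:ℝ)^s * u₁)) * ((2:ℝ)^(v-s) * u₂) := by
      apply mul_le_mul (min_le_right _ _) (min_le_left _ _)
        (le_min (by positivity) (by positivity)) (by positivity)
    refine h1.trans (le_of_eq ?_)
    rw [← habs s hs, four_pow_eq]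
    field_simp
  have hgM : ∀ s ≤ v, g s ≤ 1/P := by
    intro s hs
    have h1 : g s ≤ (1/((2:ℝ)^s * u₁)) * (1/((2:ℝ)^(v-s) * u₂)) := by
      apply mul_le_mul (min_le_right _ _) (min_le_right _ _)
        (le_min (by positivity) (by positivity)) (by positivity)
    refine h1.trans (le_of_eq ?_)
    rw [← habs s hs]
    field_simp
  -- partition
  set S : Finset ℕ := Finset.range (v+1) with hSdef
  set A : Finset ℕ := S.filter (fun s => (2:ℝ)^s * u₁ < 1) with hAdef
  set B : Finset ℕ := S.filter (fun s => ¬ ((2:ℝ)^s * u₁ < 1) ∧ (2:ℝ)^(v-s) * u₂ < 1) with hBdef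
  set M : Finset ℕ := S.filter (fun s => ¬ ((2:ℝ)^s * u₁ < 1) ∧ ¬ ((2:ℝ)^(v-s) * u₂ < 1)) with hMdef
  have hsplit : ∑ s ∈ S, g s = ∑ s ∈ A, g s + ∑ s ∈ B, g s + ∑ s ∈ M, g s := by
    rw [hAdef, hBdef, hMdef]
    rw [← Finset.sum_filter_add_sum_filter_not S (fun s => (2:ℝ)^s * u₁ < 1) g]
    rw [← Finset.sum_filter_add_sum_filter_not (S.filter (fun s => ¬ ((2:ℝ)^s * u₁ < 1)))
      (fun s => (2:ℝ)^(v-s) * u₂ < 1) g]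
    rw [Finset.filter_filter, Finset.filter_filter]
    ring
  -- bound on A
  have hAle : ∑ s ∈ A, g s ≤ (4/3) / P := by
    have h1 : ∑ s ∈ A, g s ≤ ∑ s ∈ A, (4:ℝ)^s * u₁^2 / P := by
      apply Finset.sum_le_sum
      intro s hs
      have hsv : s ≤ v := by
        have := Finset.mem_of_mem_filter s hs
        rw [hSdef, Finset.mem_range] at this; omega
      exact hgA s hsv
    refine h1.trans ?_
    rw [← Finset.sum_div]
    apply (div_le_div_iff_of_pos_right hPpos).mpr
    apply side_sum u₁ hu₁
    intro s hs
    rw [hAdef, Finset.mem_filter] at hs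
    exact hs.2
  -- bound on B
  have hBle : ∑ s ∈ B, g s ≤ (4/3) / P := by
    have hBsub : ∀ s ∈ B, s ≤ v := by
      intro s hs
      have := Finset.mem_of_mem_filter s hs
      rw [hSdef, Finset.mem_range] at this; omega
    have h1 : ∑ s ∈ B, g s ≤ ∑ s ∈ B, (4:ℝ)^(v-s) * u₂^2 / P :=
      Finset.sum_le_sum (fun s hs => hgB s (hBsub s hs))
    refine h1.trans ?_
    rw [← Finset.sum_div]
    apply (div_le_div_iff_of_pos_right hPpos).mpr
    have hinj : ∀ s ∈ B, ∀ t ∈ B, v - s = v - t → s = t := by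
      intro s hs t ht h
      have h1 := hBsub s hs
      have h2 := hBsub t ht
      omega
    have himg : ∑ j ∈ B.image (fun s => v - s), (4:ℝ)^j * u₂^2
        = ∑ s ∈ B, (4:ℝ)^(v-s) * u₂^2 := Finset.sum_image hinj
    rw [← himg]
    apply side_sum u₂ hu₂
    intro j hj
    rw [Finset.mem_image] at hj
    obtain ⟨s, hs, rfl⟩ := hj
    rw [hBdef, Finset.mem_filter] at hs
    exact hs.2.2
  -- bound on M
  have hMcard : (M.card : ℝ) ≤ Real.logb 2 P + 1 := by
    have hlogP : 0 ≤ Real.logb 2 P := Real.logb_nonneg (by norm_num) hP1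
    rcases M.eq_empty_or_nonempty with hM | hMne
    · rw [hM]; simp; linarith
    · set a := M.min' hMne with hadef
      set b := M.max' hMne with hbdef
      have hab : a ≤ b := M.min'_le b (M.max'_mem hMne)
      have hMsub : M ⊆ Finset.Icc a b := by
        intro s hs
        rw [Finset.mem_Icc]
        exact ⟨M.min'_le s hs, M.le_max' s hs⟩
      have hcard : M.card ≤ b - a + 1 := by
        calc M.card ≤ (Finset.Icc a b).card := Finset.card_le_card hMsub
          _ = b - a + 1 := Nat.card_Icc a b ▸ by omega
      -- show 2^(b-a) ≤ P
      have hamem := M.min'_mem hMne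
      have hbmem := M.max'_mem hMne
      have ha' : a ∈ S ∧ (¬ ((2:ℝ)^a * u₁ < 1) ∧ ¬ ((2:ℝ)^(v-a) * u₂ < 1)) :=
        Finset.mem_filter.mp hamem
      have hb' : b ∈ S ∧ (¬ ((2:ℝ)^b * u₁ < 1) ∧ ¬ ((2:ℝ)^(v-b) * u₂ < 1)) :=
        Finset.mem_filter.mp hbmem
      have hav : a ≤ v := by
        have := ha'.1; rw [hSdef, Finset.mem_range] at this; omega
      have hbv : b ≤ v := by
        have := hb'.1; rw [hSdef, Finset.mem_range] at this; omega
      have ha1 : (1:ℝ) ≤ 2^a * u₁ := le_of_not_gt ha'.2.1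
      have hb2 : (1:ℝ) ≤ 2^(v-b) * u₂ := le_of_not_gt hb'.2.2
      have hbP : (2:ℝ)^b * u₁ ≤ P := by
        have h := habs b hbv
        nlinarith [ha_pos b, hb_pos b]
      have hpow : (2:ℝ)^(b-a) ≤ P := by
        have h : (2:ℝ)^(b-a) * (2^a * u₁) = 2^b * u₁ := by
          rw [show (2:ℝ)^b = 2^(b-a) * 2^a by rw [← pow_add]; congr 1; omega]
          ring
        nlinarith [pow_pos (show (0:ℝ)<2 by norm_num) (b-a)]
      have hlog : ((b - a : ℕ) : ℝ) ≤ Real.logb 2 P := by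
        calc ((b - a : ℕ) : ℝ) = Real.logb 2 ((2:ℝ)^(b-a)) := by
              rw [Real.logb_pow, Real.logb_self_eq_one (by norm_num)]
              ring
          _ ≤ Real.logb 2 P := Real.logb_le_logb_of_le (by norm_num) (by positivity) hpow
      calc (M.card : ℝ) ≤ ((b - a + 1 : ℕ) : ℝ) := by exact_mod_cast hcard
        _ = ((b - a : ℕ) : ℝ) + 1 := by push_cast; ring
        _ ≤ Real.logb 2 P + 1 := by linarith
  have hMle : ∑ s ∈ M, g s ≤ (Real.logb 2 P + 1) / P := by
    have h1 : ∑ s ∈ M, g s ≤ ∑ s ∈ M, 1/P := by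
      apply Finset.sum_le_sum
      intro s hs
      have hsv : s ≤ v := by
        have := Finset.mem_of_mem_filter s hs
        rw [hSdef, Finset.mem_range] at this; omega
      exact hgM s hsv
    refine h1.trans ?_
    rw [Finset.sum_const, nsmul_eq_mul]
    rw [div_eq_mul_one_div (Real.logb 2 P + 1) P]
    apply mul_le_mul_of_nonneg_right hMcard (by positivity)
  -- assemble
  have hsum : ∑ s ∈ S, g s ≤ (8/3 + (Real.logb 2 P + 1)) / P := by
    rw [hsplit]
    have : (8/3 + (Real.logb 2 P + 1)) / P = (4/3)/P + (4/3)/P + (Real.logb 2 P + 1)/P := by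
      field_simp; ring
    rw [this]
    gcongr <;> linarith [hAle, hBle, hMle]
  have hL : Real.logb 2 ((2:ℝ)^(v+1) * u₁ * u₂) = Real.logb 2 P + 1 := by
    rw [show (2:ℝ)^(v+1) * u₁ * u₂ = 2 * P by rw [hPdef]; ring,
      Real.logb_mul (by norm_num) (ne_of_gt hPpos),
      Real.logb_self_eq_one (by norm_num)]
    ring
  have hconv : ∑ p ∈ Finset.HasAntidiagonal.antidiagonal v,
      min ((2 : ℝ) ^ p.1 * u₁) (1 / ((2 : ℝ) ^ p.1 * u₁)) *
        min ((2 : ℝ) ^ p.2 * u₂) (1 / ((2 : ℝ) ^ p.2 * u₂)) = ∑ s ∈ S, g s := by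
    rw [Finset.Nat.sum_antidiagonal_eq_sum_range_succ_mk]
  rw [hconv, hL]
  refine hsum.trans ?_
  have hlogP : 0 ≤ Real.logb 2 P := Real.logb_nonneg (by norm_num) hP1
  rw [div_le_div_iff₀ hPpos hPpos]
  nlinarith [hPpos]
end

section
/- For every d ≥ 2 there is a constant C(d) > 0 (depending only on d) such that: for all v ∈ ℕ_0 and u ∈ ℝ_+^d with 2^v · pr(u,d) ≥ 1, one has σ(v,u) ≤ C(d) · (log(2^{v+1} pr(u,d)))^{d-1} / (2^v pr(u,d)), where log denotes the logarithm to base 2. -/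
open Finset

/-- Counting lemma: tuples of naturals summing to `v` with coordinatewise lower
bound `b` number at most `(v + 1 - ∑ b)^(d-1)`. -/
lemma sigma_count_aux (m v : ℕ) (b : Fin (m + 2) → ℕ) :
    ((Finset.Nat.antidiagonalTuple (m + 2) v).filter fun s => ∀ j, b j ≤ s j).card
      ≤ (v + 1 - ∑ j, b j) ^ (m + 1) := by
  classical
  have key : ∀ s ∈ (Finset.Nat.antidiagonalTuple (m + 2) v).filter (fun s => ∀ j, b j ≤ s j),
      (fun (j : Fin (m + 1)) => s j.castSucc - b j.castSucc) ∈
        Fintype.piFinset (fun _ : Fin (m + 1) => Finset.range (v + 1 - ∑ j, b j)) := by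
    intro s hs
    simp only [Finset.mem_filter, Finset.Nat.mem_antidiagonalTuple] at hs
    obtain ⟨hsum, hb⟩ := hs
    simp only [Fintype.mem_piFinset, Finset.mem_range]
    intro j
    have h1 : ∑ i, (s i - b i) = v - ∑ i, b i := by
      rw [← hsum]; exact Finset.sum_tsub_distrib _ (fun i _ => hb i)
    have h2 : s j.castSucc - b j.castSucc ≤ ∑ i, (s i - b i) :=
      Finset.single_le_sum (f := fun i => s i - b i) (fun i _ => Nat.zero_le _)
        (Finset.mem_univ j.castSucc)
    have h3 : ∑ i, b i ≤ v := hsum ▸ Finset.sum_le_sum (fun i _ => hb i)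
    omega
  have hinj : Set.InjOn
      (fun (s : Fin (m + 2) → ℕ) => fun (j : Fin (m + 1)) => s j.castSucc - b j.castSucc)
      ↑((Finset.Nat.antidiagonalTuple (m + 2) v).filter fun s => ∀ j, b j ≤ s j) := by
    intro s hs s' hs' h
    simp only [Finset.coe_filter, Set.mem_setOf_eq, Finset.Nat.mem_antidiagonalTuple] at hs hs'
    obtain ⟨hsum, hb⟩ := hs
    obtain ⟨hsum', hb'⟩ := hs'
    have hcs : ∀ j : Fin (m + 1), s j.castSucc = s' j.castSucc := by
      intro j
      have := congrFun h j
      simp only at this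
      have h1 := hb j.castSucc
      have h2 := hb' j.castSucc
      omega
    have hsum2 : ∑ j : Fin (m + 1), s j.castSucc = ∑ j : Fin (m + 1), s' j.castSucc :=
      Finset.sum_congr rfl fun j _ => hcs j
    rw [Fin.sum_univ_castSucc] at hsum hsum'
    have hlast : s (Fin.last (m + 1)) = s' (Fin.last (m + 1)) := by omega
    funext i
    refine Fin.lastCases ?_ ?_ i
    · exact hlast
    · exact hcs
  have := Finset.card_le_card_of_injOn _ key hinj
  simpa [Fintype.card_piFinset] using this

/-- Summability of `(k+1)^p (1/4)^k`. -/
lemma sigma_summable_aux (p : ℕ) :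
    Summable (fun k : ℕ => ((k : ℝ) + 1) ^ p * (1 / 4 : ℝ) ^ k) := by
  have h1 : Summable (fun n : ℕ => (n : ℝ) ^ p * (1 / 4 : ℝ) ^ n) :=
    summable_pow_mul_geometric_of_norm_lt_one p (by rw [Real.norm_eq_abs, abs_lt]; constructor <;> norm_num)
  have h2 := (h1.comp_injective Nat.succ_injective).mul_left 4
  convert h2 using 2 with k
  case e'_3 => rfl
  simp only [Function.comp_apply, Nat.succ_eq_add_one]
  push_cast
  ring

/-- Product of rpow's with base 2. -/
lemma sigma_rpow_sum_aux {α : Type*} (s : Finset α) (f : α → ℝ) :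
    (2 : ℝ) ^ (∑ i ∈ s, f i) = ∏ i ∈ s, (2 : ℝ) ^ (f i) := by
  classical
  induction s using Finset.induction with
  | empty => simp
  | insert x s hx ih =>
    rw [Finset.sum_insert hx, Finset.prod_insert hx, Real.rpow_add two_pos, ih]

set_option maxHeartbeats 1600000 in
/-- For every `d ≥ 2` there is a constant `C(d) > 0` such that for all `v ∈ ℕ₀` and
`u ∈ ℝ₊^d` with `2^v · pr(u,d) ≥ 1` one has
`σ(v,u) = Σ_{‖s‖₁=v} ∏_j min(2^{s_j}u_j, 1/(2^{s_j}u_j))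
  ≤ C(d) · (log₂(2^{v+1} pr(u,d)))^{d-1} / (2^v pr(u,d))`. -/
theorem sigma_bound_large_volume (d : ℕ) (hd : 2 ≤ d) :
    ∃ C : ℝ, 0 < C ∧ ∀ v : ℕ, ∀ u : Fin d → ℝ, (∀ j, 0 < u j) →
      1 ≤ (2 : ℝ) ^ v * ∏ j, u j →
      ∑ s ∈ Finset.Nat.antidiagonalTuple d v,
          ∏ j, min ((2 : ℝ) ^ s j * u j) (1 / ((2 : ℝ) ^ s j * u j)) ≤
        C * Real.logb 2 ((2 : ℝ) ^ (v + 1) * ∏ j, u j) ^ (d - 1) /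
          ((2 : ℝ) ^ v * ∏ j, u j) := by
  classical
  obtain ⟨m, rfl⟩ : ∃ m, d = m + 2 := ⟨d - 2, by omega⟩
  set C0 : ℝ := ∑' k : ℕ, ((k : ℝ) + 1) ^ (m + 1) * (1 / 4 : ℝ) ^ k with hC0def
  have hsumm := sigma_summable_aux (m + 1)
  have hC0 : (1 : ℝ) ≤ C0 := by
    calc (1 : ℝ) = ((0 : ℕ) + 1 : ℝ) ^ (m + 1) * (1 / 4 : ℝ) ^ (0 : ℕ) := by norm_num
      _ ≤ C0 := Summable.le_tsum hsumm 0 (fun j _ => by positivity)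
  refine ⟨(2 * (m + 2)) ^ (m + 1) * C0,
    mul_pos (by positivity) (lt_of_lt_of_le one_pos hC0), ?_⟩
  intro v u hu hP
  set P : ℝ := ∏ j, u j with hPdef
  have hPpos : 0 < P := Finset.prod_pos fun j _ => hu j
  set Q : ℝ := (2 : ℝ) ^ v * P with hQdef
  have hQ1 : (1 : ℝ) ≤ Q := hP
  have hQpos : (0 : ℝ) < Q := lt_of_lt_of_le one_pos hQ1
  -- the exponents t j
  set t : Fin (m + 2) → ℝ := fun j => -Real.logb 2 (u j) with htdef
  have hut : ∀ j, (2 : ℝ) ^ (-(t j)) = u j := by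
    intro j
    simp only [htdef, neg_neg]
    exact Real.rpow_logb two_pos (by norm_num) (hu j)
  have htsum : ∑ j, t j = -Real.logb 2 P := by
    simp only [htdef]
    rw [Finset.sum_neg_distrib, hPdef, Real.logb_prod _ _ (fun j _ => (hu j).ne')]
  -- M and the logarithm L
  set M : ℝ := v + Real.logb 2 P with hMdef
  have hlogQ : Real.logb 2 Q = M := by
    rw [hQdef, Real.logb_mul (by positivity) hPpos.ne', hMdef, Real.logb_pow,
      Real.logb_self_eq_one one_lt_two]
    ring
  have hM0 : 0 ≤ M := hlogQ ▸ Real.logb_nonneg one_lt_two hQ1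
  have hL : Real.logb 2 ((2 : ℝ) ^ (v + 1) * P) = M + 1 := by
    rw [Real.logb_mul (by positivity) hPpos.ne', Real.logb_pow,
      Real.logb_self_eq_one one_lt_two, hMdef]
    push_cast
    ring
  -- Q as an rpow
  have hQr : (2 : ℝ) ^ ((v : ℝ) + Real.logb 2 P) = Q := by
    rw [Real.rpow_add two_pos, Real.rpow_natCast, Real.rpow_logb two_pos (by norm_num) hPpos]
  -- the weight g
  set g : (Fin (m + 2) → ℕ) → ℝ := fun s => ∑ j, max (t j - s j) 0 with hgdef
  have hg0 : ∀ s, 0 ≤ g s := fun s => Finset.sum_nonneg fun j _ => le_max_right _ _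
  -- per-term identity
  have hterm : ∀ s ∈ Finset.Nat.antidiagonalTuple (m + 2) v,
      ∏ j, min ((2 : ℝ) ^ s j * u j) (1 / ((2 : ℝ) ^ s j * u j)) =
        (1 / Q) * (2 : ℝ) ^ (-(2 * g s)) := by
    intro s hs
    rw [Finset.Nat.mem_antidiagonalTuple] at hs
    have hfac : ∀ j : Fin (m + 2),
        min ((2 : ℝ) ^ s j * u j) (1 / ((2 : ℝ) ^ s j * u j)) =
          (1 / ((2 : ℝ) ^ s j * u j)) * (2 : ℝ) ^ (-(2 * max (t j - s j) 0)) := by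
      intro j
      set x : ℝ := (2 : ℝ) ^ s j * u j with hxdef
      have hxpos : 0 < x := by rw [hxdef]; exact mul_pos (by positivity) (hu j)
      have hxr : x = (2 : ℝ) ^ ((s j : ℝ) - t j) := by
        rw [Real.rpow_sub two_pos, Real.rpow_natCast, hxdef]
        rw [← hut j, Real.rpow_neg (by norm_num)]
        ring
      have hmono : Monotone fun y : ℝ => (2 : ℝ) ^ y :=
        fun a b hab => Real.rpow_le_rpow_of_exponent_le one_le_two hab
      have hx2 : min (x ^ 2) 1 = (2 : ℝ) ^ (-(2 * max (t j - s j) 0)) := by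
        have h1 : x ^ 2 = (2 : ℝ) ^ (((s j : ℝ) - t j) + ((s j : ℝ) - t j)) := by
          rw [Real.rpow_add two_pos, ← hxr, sq]
        have h2 : (1 : ℝ) = (2 : ℝ) ^ (0 : ℝ) := (Real.rpow_zero 2).symm
        rw [h1, h2, ← hmono.map_min]
        congr 1
        rcases le_total (t j) (s j : ℝ) with h | h
        · rw [max_eq_right (by linarith), min_eq_right (by linarith)]
          ring
        · rw [max_eq_left (by linarith), min_eq_left (by linarith)]
          ring
      have hmin : min x (1 / x) = (1 / x) * min (x ^ 2) 1 := by
        rcases le_total x (1 / x) with h | h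
        · have hx21 : x ^ 2 ≤ 1 := by
            have := mul_le_mul_of_nonneg_left h hxpos.le
            rwa [mul_one_div_cancel hxpos.ne', ← sq] at this
          rw [min_eq_left h, min_eq_left hx21]
          field_simp
        · have hx21 : 1 ≤ x ^ 2 := by
            have := mul_le_mul_of_nonneg_left h hxpos.le
            rwa [mul_one_div_cancel hxpos.ne', ← sq] at this
          rw [min_eq_right h, min_eq_right hx21, mul_one]
      rw [hmin, hx2]
    calc ∏ j, min ((2 : ℝ) ^ s j * u j) (1 / ((2 : ℝ) ^ s j * u j))
        = ∏ j, ((1 / ((2 : ℝ) ^ s j * u j)) * (2 : ℝ) ^ (-(2 * max (t j - (s j : ℝ)) 0))) :=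
          Finset.prod_congr rfl fun j _ => hfac j
      _ = (∏ j, (1 / ((2 : ℝ) ^ s j * u j))) *
            ∏ j, (2 : ℝ) ^ (-(2 * max (t j - (s j : ℝ)) 0)) := Finset.prod_mul_distrib
      _ = (1 / Q) * (2 : ℝ) ^ (-(2 * g s)) := by
          congr 1
          · rw [Finset.prod_div_distrib, Finset.prod_const_one, Finset.prod_mul_distrib,
              Finset.prod_pow_eq_pow_sum, hs, ← hPdef, ← hQdef]
          · rw [← sigma_rpow_sum_aux]
            congr 1
            rw [hgdef, Finset.mul_sum, ← Finset.sum_neg_distrib]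
  -- rewrite the sum
  rw [Finset.sum_congr rfl hterm, ← Finset.mul_sum]
  -- reduce to bounding S
  set S : ℝ := ∑ s ∈ Finset.Nat.antidiagonalTuple (m + 2) v, (2 : ℝ) ^ (-(2 * g s)) with hSdef
  have key : S ≤ (2 * (m + 2)) ^ (m + 1) * C0 * (M + 1) ^ (m + 1) := by
    -- fiber decomposition by k = ⌊g s⌋₊
    set A := Finset.Nat.antidiagonalTuple (m + 2) v with hAdef
    set fl : (Fin (m + 2) → ℕ) → ℕ := fun s => ⌊g s⌋₊ with hfldef
    have hfib : S = ∑ k ∈ A.image fl, ∑ s ∈ A.filter (fun s => fl s = k),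
        (2 : ℝ) ^ (-(2 * g s)) := by
      rw [hSdef, Finset.sum_fiberwise_of_maps_to (fun s hs => Finset.mem_image_of_mem fl hs)]
    rw [hfib]
    -- bound each fiber
    have hfiber : ∀ k ∈ A.image fl,
        ∑ s ∈ A.filter (fun s => fl s = k), (2 : ℝ) ^ (-(2 * g s)) ≤
          ((2 * (m + 2)) ^ (m + 1) * (M + 1) ^ (m + 1)) *
            (((k : ℝ) + 1) ^ (m + 1) * (1 / 4 : ℝ) ^ k) := by
      intro k _
      -- each term in the fiber is at most (1/4)^k
      have hterm' : ∀ s ∈ A.filter (fun s => fl s = k),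
          (2 : ℝ) ^ (-(2 * g s)) ≤ (1 / 4 : ℝ) ^ k := by
        intro s hs
        rw [Finset.mem_filter] at hs
        have hk : (k : ℝ) ≤ g s := by
          rw [← hs.2, hfldef]
          exact Nat.floor_le (hg0 s)
        have : (2 : ℝ) ^ (-(2 * g s)) ≤ (2 : ℝ) ^ (-(2 * (k : ℝ))) :=
          Real.rpow_le_rpow_of_exponent_le one_le_two (by linarith)
        refine this.trans_eq ?_
        rw [show (-(2 * (k : ℝ))) = (-2 : ℝ) * (k : ℕ) by push_cast; ring,
          Real.rpow_mul (by norm_num), Real.rpow_natCast]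
        congr 1
        rw [Real.rpow_neg (by norm_num), show ((2 : ℝ) ^ (2 : ℝ)) = 4 by
          rw [show (2 : ℝ) = ((2 : ℕ) : ℝ) from rfl, Real.rpow_natCast]; norm_num]
        norm_num
      -- cardinality of the fiber
      set b : Fin (m + 2) → ℕ := fun j => (⌈t j - k - 1⌉).toNat with hbdef
      have hsub : A.filter (fun s => fl s = k) ⊆ A.filter (fun s => ∀ j, b j ≤ s j) := by
        intro s hs
        rw [Finset.mem_filter] at hs ⊢
        refine ⟨hs.1, fun j => ?_⟩
        have hgk : g s < k + 1 := by
          have := Nat.lt_floor_add_one (g s)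
          rw [hfldef] at hs
          rw [← hs.2]
          exact_mod_cast this
        have hj : max (t j - (s j : ℝ)) 0 ≤ g s := by
          simp only [hgdef]
          exact Finset.single_le_sum (f := fun i => max (t i - (s i : ℝ)) 0)
            (fun i _ => le_max_right _ _) (Finset.mem_univ j)
        have : t j - (s j : ℝ) < k + 1 := lt_of_le_of_lt (le_max_left _ _) (hj.trans_lt hgk)
        rw [hbdef, Int.toNat_le, Int.ceil_le]
        push_cast
        linarith
      have hcard : (A.filter (fun s => fl s = k)).card ≤ (v + 1 - ∑ j, b j) ^ (m + 1) :=
        le_trans (Finset.card_le_card hsub) (sigma_count_aux m v b)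
      -- real bound on the cardinality
      have hcardR : ((A.filter (fun s => fl s = k)).card : ℝ) ≤
          ((M + 1) + (m + 2) * ((k : ℝ) + 1)) ^ (m + 1) := by
        have hNk : (((v + 1 - ∑ j, b j : ℕ)) : ℝ) ≤ (M + 1) + (m + 2) * ((k : ℝ) + 1) := by
          have hb : ∀ j, t j - ((k : ℝ) + 1) ≤ (b j : ℝ) := by
            intro j
            have h1 : t j - k - 1 ≤ (⌈t j - k - 1⌉ : ℝ) := Int.le_ceil _
            have h2 : ((⌈t j - k - 1⌉ : ℤ) : ℝ) ≤ (((⌈t j - k - 1⌉).toNat : ℕ) : ℝ) := by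
              exact_mod_cast Int.self_le_toNat _
            rw [hbdef]
            linarith
          have hbsum : ∑ j, t j - (m + 2) * ((k : ℝ) + 1) ≤ ((∑ j, b j : ℕ) : ℝ) := by
            have h := Finset.sum_le_sum (fun j (_ : j ∈ Finset.univ) => hb j)
            rw [Finset.sum_sub_distrib, Finset.sum_const, Finset.card_univ,
              Fintype.card_fin, nsmul_eq_mul] at h
            push_cast at h ⊢
            linarith
          rw [htsum] at hbsum
          by_cases hc : (∑ j, b j) ≤ v + 1
          · rw [Nat.cast_sub hc]
            push_cast
            rw [hMdef]
            push_cast at hbsum ⊢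
            linarith
          · rw [Nat.sub_eq_zero_of_le (by omega)]
            have : (0 : ℝ) ≤ (M + 1) + (m + 2) * ((k : ℝ) + 1) := by positivity
            simpa using this
        calc ((A.filter (fun s => fl s = k)).card : ℝ)
            ≤ (((v + 1 - ∑ j, b j : ℕ) ^ (m + 1) : ℕ) : ℝ) := by exact_mod_cast hcard
          _ = (((v + 1 - ∑ j, b j : ℕ)) : ℝ) ^ (m + 1) := by push_cast; ring
          _ ≤ ((M + 1) + (m + 2) * ((k : ℝ) + 1)) ^ (m + 1) :=
              pow_le_pow_left₀ (by positivity) hNk _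
      -- combine
      have hcomb : ((M + 1) + (m + 2) * ((k : ℝ) + 1)) ^ (m + 1) ≤
          (2 * (m + 2)) ^ (m + 1) * (M + 1) ^ (m + 1) * ((k : ℝ) + 1) ^ (m + 1) := by
        rw [← mul_pow, ← mul_pow]
        have hbase : (0 : ℝ) ≤ (M + 1) + (m + 2) * ((k : ℝ) + 1) := by
          have h0 : (0 : ℝ) ≤ ((m : ℝ) + 2) * ((k : ℝ) + 1) := by positivity
          linarith
        refine pow_le_pow_left₀ hbase ?_ _
        have hk0 : (0 : ℝ) ≤ (k : ℝ) := Nat.cast_nonneg k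
        have hm0 : (0 : ℝ) ≤ (m : ℝ) := Nat.cast_nonneg m
        have h1 : (1 : ℝ) ≤ M + 1 := by linarith
        have e0 : (1 : ℝ) ≤ ((m : ℝ) + 2) * ((k : ℝ) + 1) := by
          have := mul_le_mul (by linarith : (1 : ℝ) ≤ (m : ℝ) + 2)
            (by linarith : (1 : ℝ) ≤ (k : ℝ) + 1) (by norm_num) (by linarith)
          linarith
        have e1 : M + 1 ≤ (M + 1) * (((m : ℝ) + 2) * ((k : ℝ) + 1)) := by
          have := mul_le_mul_of_nonneg_left e0 (by linarith : (0 : ℝ) ≤ M + 1)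
          linarith
        have e2 : ((m : ℝ) + 2) * ((k : ℝ) + 1) ≤ (M + 1) * (((m : ℝ) + 2) * ((k : ℝ) + 1)) := by
          have h3 : (0 : ℝ) ≤ ((m : ℝ) + 2) * ((k : ℝ) + 1) := by positivity
          nlinarith
        nlinarith [e1, e2]
      calc ∑ s ∈ A.filter (fun s => fl s = k), (2 : ℝ) ^ (-(2 * g s))
          ≤ ((A.filter (fun s => fl s = k)).card : ℝ) * (1 / 4 : ℝ) ^ k := by
            have := Finset.sum_le_card_nsmul _ _ _ hterm'
            rwa [nsmul_eq_mul] at this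
        _ ≤ (((M + 1) + (m + 2) * ((k : ℝ) + 1)) ^ (m + 1)) * (1 / 4 : ℝ) ^ k :=
            mul_le_mul_of_nonneg_right hcardR (by positivity)
        _ ≤ ((2 * (m + 2)) ^ (m + 1) * (M + 1) ^ (m + 1) * ((k : ℝ) + 1) ^ (m + 1)) *
              (1 / 4 : ℝ) ^ k := mul_le_mul_of_nonneg_right hcomb (by positivity)
        _ = ((2 * (m + 2)) ^ (m + 1) * (M + 1) ^ (m + 1)) *
              (((k : ℝ) + 1) ^ (m + 1) * (1 / 4 : ℝ) ^ k) := by ring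
    calc ∑ k ∈ A.image fl, ∑ s ∈ A.filter (fun s => fl s = k), (2 : ℝ) ^ (-(2 * g s))
        ≤ ∑ k ∈ A.image fl, ((2 * (m + 2)) ^ (m + 1) * (M + 1) ^ (m + 1)) *
            (((k : ℝ) + 1) ^ (m + 1) * (1 / 4 : ℝ) ^ k) := Finset.sum_le_sum hfiber
      _ = ((2 * (m + 2)) ^ (m + 1) * (M + 1) ^ (m + 1)) *
            ∑ k ∈ A.image fl, (((k : ℝ) + 1) ^ (m + 1) * (1 / 4 : ℝ) ^ k) := by
          rw [Finset.mul_sum]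
      _ ≤ ((2 * (m + 2)) ^ (m + 1) * (M + 1) ^ (m + 1)) * C0 := by
          refine mul_le_mul_of_nonneg_left ?_
            (mul_nonneg (by positivity) (pow_nonneg (by linarith) _))
          exact Summable.sum_le_tsum _ (fun k _ => by positivity) hsumm
      _ = (2 * (m + 2)) ^ (m + 1) * C0 * (M + 1) ^ (m + 1) := by ring
  -- conclude
  rw [hL]
  have hfinal : (1 / Q) * S ≤
      (2 * (m + 2)) ^ (m + 1) * C0 * (M + 1) ^ (m + 1) / Q := by
    calc (1 / Q) * S ≤ (1 / Q) * ((2 * (m + 2)) ^ (m + 1) * C0 * (M + 1) ^ (m + 1)) :=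
          mul_le_mul_of_nonneg_left key (one_div_nonneg.2 hQpos.le)
      _ = (2 * (m + 2)) ^ (m + 1) * C0 * (M + 1) ^ (m + 1) / Q := by ring
  simpa using hfinal
end

section
/- Let d ≥ 2 and let A be a matrix with the Frolov lattice properties (1°) and (2°). Then there is a constant C(A,d) > 0, depending only on A and d, such that for all a > 1 the dispersion of the Frolov point set satisfies disp(F(a,A)) ≤ C(A,d) a^{-d}. -/
open Matrix MeasureTheory Set

namespace FrolovAux

variable {d : ℕ}

noncomputable def TT (d : ℕ) (Δ : ℝ) : ℝ := (2 * (d : ℝ)) ^ d * (Δ + 1)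
noncomputable def Bw (d : ℕ) (Δ : ℝ) : ℝ := (Nat.factorial d : ℝ) * (TT d Δ) ^ d / Δ

/-- integer-translate unit cube -/
def cube (m : Fin d → ℤ) : Set (Fin d → ℝ) :=
  Set.univ.pi fun i => Set.Ico (m i : ℝ) (m i + 1)

lemma cube_mem_iff (m : Fin d → ℤ) (x : Fin d → ℝ) :
    x ∈ cube m ↔ ∀ i, ⌊x i⌋ = m i := by
  simp only [cube, Set.mem_univ_pi, Set.mem_Ico]
  refine forall_congr' fun i => ?_
  rw [Int.floor_eq_iff]

lemma measurable_cube (m : Fin d → ℤ) : MeasurableSet (cube m) :=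
  MeasurableSet.univ_pi fun i => measurableSet_Ico

lemma volume_eq_tsum_cube (s : Set (Fin d → ℝ)) (hs : MeasurableSet s) :
    volume s = ∑' m : Fin d → ℤ, volume (s ∩ cube m) := by
  have hpart : ⋃ m : Fin d → ℤ, (s ∩ cube m) = s := by
    ext x
    simp only [Set.mem_iUnion, Set.mem_inter_iff]
    constructor
    · rintro ⟨m, hx, -⟩; exact hx
    · intro hx; exact ⟨fun i => ⌊x i⌋, hx, (cube_mem_iff _ _).2 fun i => rfl⟩
  have hdisj : Pairwise (Function.onFun Disjoint fun m : Fin d → ℤ => s ∩ cube m) := by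
    intro m m' hmm
    refine Set.disjoint_left.2 ?_
    rintro x ⟨-, hx⟩ ⟨-, hx'⟩
    exact hmm (funext fun i => ((cube_mem_iff _ _).1 hx i).symm.trans ((cube_mem_iff _ _).1 hx' i))
  conv_lhs => rw [← hpart]
  exact measure_iUnion hdisj fun m => hs.inter (measurable_cube m)

lemma abs_det_le (B : Matrix (Fin d) (Fin d) ℝ) (K : ℝ) (hK : 0 ≤ K)
    (h : ∀ i j, |B i j| ≤ K) : |B.det| ≤ (Nat.factorial d : ℝ) * K ^ d := by
  rw [Matrix.det_apply]
  refine (Finset.abs_sum_le_sum_abs _ _).trans ?_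
  have key : ∀ σ : Equiv.Perm (Fin d), |Equiv.Perm.sign σ • ∏ i, B (σ i) i| ≤ K ^ d := by
    intro σ
    have h1 : |∏ i, B (σ i) i| ≤ K ^ d := by
      rw [Finset.abs_prod]
      calc ∏ i, |B (σ i) i| ≤ ∏ _i : Fin d, K :=
            Finset.prod_le_prod (fun _ _ => abs_nonneg _) (fun i _ => h _ _)
        _ = K ^ d := by simp
    rcases Int.units_eq_one_or (Equiv.Perm.sign σ) with hσ | hσ <;>
      simp [hσ, Units.smul_def, h1, abs_neg]
  refine (Finset.sum_le_sum fun σ _ => key σ).trans ?_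
  rw [Finset.sum_const, nsmul_eq_mul, Finset.card_univ, Fintype.card_perm, Fintype.card_fin]

lemma capacity (hd : 1 ≤ d) (T : ℝ) (hT : 1 ≤ T) (c : Fin d → ℝ) {n : Fin d → ℝ}
    (hn : n ≠ 0) (b : ℝ) (S : Finset (Fin d → ℝ))
    (hbox : ∀ p ∈ S, ∀ i, c i ≤ p i ∧ p i ≤ c i + T)
    (hsep : ∀ p ∈ S, ∀ q ∈ S, p ≠ q → ∃ i, 1 ≤ |p i - q i|)
    (hplane : ∀ p ∈ S, ∑ i, n i * p i = b) :
    (S.card : ℝ) ≤ (T * d + 2) ^ (d - 1) := by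
  classical
  have hd0 : 0 < (d : ℝ) := by positivity
  obtain ⟨i₀, hi₀ne⟩ : ∃ i, n i ≠ 0 := by
    by_contra hc; push_neg at hc; exact hn (funext hc)
  obtain ⟨j, -, hj⟩ := Finset.exists_max_image Finset.univ (fun i => |n i|)
    ⟨i₀, Finset.mem_univ _⟩
  have hnj : 0 < |n j| := lt_of_lt_of_le (abs_pos.2 hi₀ne) (hj i₀ (Finset.mem_univ _))
  set G : (Fin d → ℝ) → (Fin d → ℤ) := fun p i => if i = j then 0 else ⌊p i * d⌋ with hG
  -- injectivity
  have hinj : ∀ p ∈ S, ∀ q ∈ S, G p = G q → p = q := by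
    intro p hp q hq hpq
    by_contra hne
    obtain ⟨i₁, hi₁⟩ := hsep p hp q hq hne
    have hsmall : ∀ i, i ≠ j → |p i - q i| < 1 / d := by
      intro i hij
      have hfl : ⌊p i * d⌋ = ⌊q i * d⌋ := by
        have := congrFun hpq i
        simpa [hG, hij] using this
      have h1 : |p i * (d : ℝ) - q i * d| < 1 := by
        rw [abs_sub_lt_iff]
        constructor
        · have ha := Int.floor_le (q i * (d : ℝ))
          have hb := Int.lt_floor_add_one (p i * (d : ℝ))
          rw [hfl] at hb
          linarith
        · have ha := Int.floor_le (p i * (d : ℝ))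
          have hb := Int.lt_floor_add_one (q i * (d : ℝ))
          rw [hfl] at ha
          linarith
      rw [div_eq_inv_mul, lt_inv_mul_iff₀ hd0]
      calc (d : ℝ) * |p i - q i| = |(p i - q i) * d| := by
            rw [abs_mul, abs_of_pos hd0]; ring
        _ = |p i * (d : ℝ) - q i * d| := by rw [show (p i - q i) * (d:ℝ) = p i * d - q i * d by ring]
        _ < 1 := h1
    have hlt : ∀ i, |p i - q i| < 1 := by
      intro i
      by_cases hij : i = j
      · subst hij
        have hsum : ∑ i, n i * (p i - q i) = 0 := by
          have := (hplane p hp).trans (hplane q hq).symm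
          calc ∑ i, n i * (p i - q i) = ∑ i, n i * p i - ∑ i, n i * q i := by
                rw [← Finset.sum_sub_distrib]; congr 1; funext i; ring
            _ = 0 := by rw [this]; ring
        have hsplit : n i * (p i - q i)
            + ∑ k ∈ Finset.univ.erase i, n k * (p k - q k) = 0 := by
          rw [Finset.add_sum_erase Finset.univ (fun k => n k * (p k - q k))
            (Finset.mem_univ i)]
          exact hsum
        have hkey : n i * (p i - q i) = -∑ k ∈ Finset.univ.erase i, n k * (p k - q k) := by
          linarith
        have hbound : |n i * (p i - q i)| ≤ (d - 1) * (|n i| / d) := by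
          rw [hkey, abs_neg]
          refine (Finset.abs_sum_le_sum_abs _ _).trans ?_
          have : ∀ k ∈ Finset.univ.erase i, |n k * (p k - q k)| ≤ |n i| / d := by
            intro k hk
            have hkj : k ≠ i := Finset.ne_of_mem_erase hk
            rw [abs_mul]
            have := (hsmall k hkj).le
            calc |n k| * |p k - q k| ≤ |n i| * (1 / d) := by
                  exact mul_le_mul (hj k (Finset.mem_univ _)) this (abs_nonneg _) (abs_nonneg _)
              _ = |n i| / d := by ring
          refine (Finset.sum_le_sum this).trans ?_
          rw [Finset.sum_const]
          rw [Finset.card_erase_of_mem (Finset.mem_univ i), Finset.card_univ, Fintype.card_fin]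
          rw [nsmul_eq_mul]
          have : ((d - 1 : ℕ) : ℝ) = (d : ℝ) - 1 := by
            have : (1 : ℕ) ≤ d := hd
            push_cast [this]; ring
          rw [this]
        have h2 : |n i| * |p i - q i| ≤ (d - 1) * (|n i| / d) := by
          rw [← abs_mul]; exact hbound
        have h3 : (d - 1 : ℝ) * (|n i| / d) < |n i| * 1 := by
          rw [mul_one]
          rw [div_eq_inv_mul, ← mul_assoc]
          rw [show (d - 1 : ℝ) * (d : ℝ)⁻¹ * |n i| = ((d - 1) / d) * |n i| by ring]
          refine mul_lt_of_lt_one_left hnj ?_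
          rw [div_lt_one hd0]; linarith
        nlinarith [abs_nonneg (p i - q i)]
      · exact (hsmall i hij).trans_le (by rw [div_le_one hd0]; exact_mod_cast hd)
    exact absurd hi₁ (not_le.2 (hlt i₁))
  -- image is contained in a grid box
  set lo : Fin d → ℤ := fun i => if i = j then 0 else ⌊c i * d⌋ with hlo
  set hi : Fin d → ℤ := fun i => if i = j then 0 else ⌊(c i + T) * d⌋ with hhi
  have himg : S.image G ⊆ Finset.Icc lo hi := by
    intro g hg
    obtain ⟨p, hp, rfl⟩ := Finset.mem_image.1 hg
    rw [Finset.mem_Icc]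
    constructor
    · refine Pi.le_def.2 fun i => ?_
      by_cases hij : i = j
      · simp [hG, hlo, hij]
      · simp only [hG, hlo, hij, if_false]
        exact Int.floor_le_floor (by nlinarith [(hbox p hp i).1])
    · refine Pi.le_def.2 fun i => ?_
      by_cases hij : i = j
      · simp [hG, hhi, hij]
      · simp only [hG, hhi, hij, if_false]
        exact Int.floor_le_floor (by nlinarith [(hbox p hp i).2])
  have hcard : S.card ≤ (Finset.Icc lo hi).card := by
    rw [← Finset.card_image_of_injOn (fun p hp q hq => hinj p hp q hq)]
    exact Finset.card_le_card himg
  have hcard2 : ((Finset.Icc lo hi).card : ℝ) ≤ (T * d + 2) ^ (d - 1) := by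
    rw [Pi.card_Icc]
    push_cast
    have hfac : ∀ i, ((Finset.Icc (lo i) (hi i)).card : ℝ) ≤ if i = j then 1 else T * d + 2 := by
      intro i
      by_cases hij : i = j
      · simp [hij, hlo, hhi]
      · simp only [hij, if_false, hlo, hhi, Int.card_Icc]
        have hmono : ⌊c i * d⌋ ≤ ⌊(c i + T) * d⌋ :=
          Int.floor_le_floor (by nlinarith)
        have hz : (0:ℤ) ≤ ⌊(c i + T) * d⌋ + 1 - ⌊c i * d⌋ := by omega
        have htn' := Int.toNat_of_nonneg hz
        have htn : ((⌊(c i + T) * d⌋ + 1 - ⌊c i * d⌋).toNat : ℝ)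
            = ((⌊(c i + T) * d⌋ : ℝ) + 1 - ⌊c i * d⌋) := by
          exact_mod_cast congrArg (fun z : ℤ => (z : ℝ)) htn'
        rw [htn]
        have h1 : (⌊(c i + T) * d⌋ : ℝ) ≤ (c i + T) * d := Int.floor_le _
        have h2 : c i * d - 1 < ⌊c i * d⌋ := Int.sub_one_lt_floor _
        nlinarith
    calc ∏ i, ((Finset.Icc (lo i) (hi i)).card : ℝ)
        ≤ ∏ i, (if i = j then 1 else T * d + 2) :=
          Finset.prod_le_prod (fun i _ => by positivity) (fun i _ => hfac i)
      _ = (T * d + 2) ^ (d - 1) := by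
          rw [← Finset.mul_prod_erase Finset.univ _ (Finset.mem_univ j)]
          simp only [if_true, one_mul]
          rw [Finset.prod_ite_of_false]
          · rw [Finset.prod_const, Finset.card_erase_of_mem (Finset.mem_univ j),
              Finset.card_univ, Fintype.card_fin]
          · intro i hi'; exact Finset.ne_of_mem_erase hi'
  calc (S.card : ℝ) ≤ ((Finset.Icc lo hi).card : ℝ) := by exact_mod_cast hcard
    _ ≤ _ := hcard2

lemma blichfeldt (s : Set (Fin d → ℝ)) (hs : MeasurableSet s) (N : ℕ)
    (hN : (N : ENNReal) < volume s) :
    ∃ y : Fin d → ℝ, ∃ Q : Finset (Fin d → ℤ), Q.card = N + 1 ∧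
      ∀ m ∈ Q, (fun i => y i + (m i : ℝ)) ∈ s := by
  classical
  by_contra hcon
  push_neg at hcon
  have hbound : ∀ y : Fin d → ℝ,
      ∑' m : Fin d → ℤ, (s.indicator (fun _ => (1 : ENNReal)) (fun i => y i + (m i : ℝ))) ≤ N := by
    intro y
    rw [ENNReal.tsum_eq_iSup_sum]
    refine iSup_le fun F => ?_
    have hsum : ∑ m ∈ F, s.indicator (fun _ => (1:ENNReal)) (fun i => y i + (m i : ℝ))
        = ((F.filter fun m => (fun i => y i + (m i : ℝ)) ∈ s).card : ENNReal) := by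
      rw [Finset.card_filter]
      push_cast
      refine Finset.sum_congr rfl fun m _ => ?_
      by_cases hm : (fun i => y i + (m i : ℝ)) ∈ s <;> simp [hm, Set.indicator]
    rw [hsum]
    have hcard : (F.filter fun m => (fun i => y i + (m i : ℝ)) ∈ s).card ≤ N := by
      by_contra hgt
      push_neg at hgt
      obtain ⟨Q, hQsub, hQcard⟩ := Finset.exists_subset_card_eq hgt
      obtain ⟨m, hmQ, hms⟩ := hcon y Q hQcard
      exact hms (Finset.mem_filter.1 (hQsub hmQ)).2
    exact_mod_cast hcard
  set c0 : Set (Fin d → ℝ) := cube (0 : Fin d → ℤ) with hc0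
  have hvol_c0 : volume c0 = 1 := by
    simp only [hc0, cube, volume_pi_pi, Pi.zero_apply, Int.cast_zero, zero_add,
      Real.volume_Ico, sub_zero, ENNReal.ofReal_one, Finset.prod_const_one]
  have hmeas : ∀ m : Fin d → ℤ, Measurable fun y : Fin d → ℝ =>
      s.indicator (fun _ => (1:ENNReal)) (fun i => y i + (m i : ℝ)) := by
    intro m
    have heq : (fun y : Fin d → ℝ => s.indicator (fun _ => (1:ENNReal)) (fun i => y i + (m i : ℝ)))
        = (s.indicator (fun _ => (1:ENNReal))) ∘ (fun y => y + (fun i => (m i : ℝ))) := rfl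
    rw [heq]
    exact (measurable_one.indicator hs).comp (measurable_id.add_const _)
  have hint : ∫⁻ y in c0,
      ∑' m : Fin d → ℤ, s.indicator (fun _ => (1:ENNReal)) (fun i => y i + (m i : ℝ))
      = ∑' m : Fin d → ℤ, volume (s ∩ cube m) := by
    rw [lintegral_tsum (fun m => (hmeas m).aemeasurable)]
    refine tsum_congr fun m => ?_
    have hprem : Measurable fun y : Fin d → ℝ => (fun i => (m i : ℝ)) + y :=
      measurable_id.const_add _
    have hpreS : MeasurableSet ((fun y : Fin d → ℝ => (fun i => (m i : ℝ)) + y) ⁻¹' s) :=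
      hs.preimage hprem
    have hind : ∀ y : Fin d → ℝ, s.indicator (fun _ => (1:ENNReal)) (fun i => y i + (m i : ℝ))
        = ((fun y : Fin d → ℝ => (fun i => (m i : ℝ)) + y) ⁻¹' s).indicator
            (fun _ => (1:ENNReal)) y := by
      intro y
      have hyv : (fun i => y i + (m i : ℝ)) = (fun i => (m i : ℝ)) + y := by
        funext i; exact add_comm _ _
      rw [hyv]
      simp only [Set.indicator_apply, Set.mem_preimage]
    simp_rw [hind]
    rw [lintegral_indicator_const hpreS, one_mul,
      Measure.restrict_apply hpreS]
    have hset : ((fun y : Fin d → ℝ => (fun i => (m i : ℝ)) + y) ⁻¹' s) ∩ c0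
        = (fun y : Fin d → ℝ => (fun i => (m i : ℝ)) + y) ⁻¹' (s ∩ cube m) := by
      ext y
      simp only [Set.mem_inter_iff, Set.mem_preimage]
      have hiff : y ∈ c0 ↔ ((fun i => (m i : ℝ)) + y) ∈ cube m := by
        rw [hc0, cube_mem_iff, cube_mem_iff]
        refine forall_congr' fun i => ?_
        have happ : ((fun i => (m i : ℝ)) + y) i = (m i : ℝ) + y i := rfl
        rw [happ, Pi.zero_apply, add_comm, Int.floor_add_intCast]
        omega
      tauto
    rw [hset, measure_preimage_add]
  have hle : volume s ≤ (N : ENNReal) := by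
    rw [volume_eq_tsum_cube s hs, ← hint]
    calc ∫⁻ y in c0,
        ∑' m : Fin d → ℤ, s.indicator (fun _ => (1:ENNReal)) (fun i => y i + (m i : ℝ))
        ≤ ∫⁻ _y in c0, (N : ENNReal) :=
          setLIntegral_mono measurable_const (fun y _ => hbound y)
      _ = (N : ENNReal) * volume c0 := setLIntegral_const _ _
      _ = (N : ENNReal) := by rw [hvol_c0, mul_one]
  exact absurd hN (not_lt.2 hle)

lemma exists_indep (hd : 2 ≤ d) (M : Matrix (Fin d) (Fin d) ℝ) {Δ : ℝ} (hΔ : 0 < Δ)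
    (hdet : |M.det| = Δ)
    (hsep : ∀ m : Fin d → ℤ, m ≠ 0 → ∃ i, 1 ≤ |M.mulVec (fun j => (m j : ℝ)) i|) :
    ∃ u : Fin d → (Fin d → ℤ),
      LinearIndependent ℝ (fun k => M.mulVec (fun j => ((u k j : ℝ)))) ∧
      ∀ k i, |M.mulVec (fun j => ((u k j : ℝ))) i| ≤ TT d Δ := by
  classical
  have hdR : (2:ℝ) ≤ (d:ℝ) := by exact_mod_cast hd
  have hd0 : (0:ℝ) < d := by linarith
  set T : ℝ := TT d Δ with hTdef
  have hT1 : 1 ≤ T := by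
    rw [hTdef, TT]
    have h1 : (1:ℝ) ≤ (2 * (d:ℝ)) ^ d := one_le_pow₀ (by linarith)
    nlinarith
  have hT0 : 0 < T := by linarith
  have hdet0 : M.det ≠ 0 := by
    intro h; rw [h, abs_zero] at hdet; exact hΔ.ne' hdet.symm
  set N : ℕ := ⌈(T * d + 2) ^ (d - 1)⌉₊ with hNdef
  -- the key numeric inequality
  have hnum : (N : ℝ) < T ^ d / Δ := by
    have hb : (T * d + 2) ^ (d - 1) ≤ (2 * d * T) ^ (d - 1) := by
      apply pow_le_pow_left₀ (by positivity)
      nlinarith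
    have hceil : (N : ℝ) < (T * d + 2) ^ (d - 1) + 1 :=
      Nat.ceil_lt_add_one (by positivity)
    have hX1 : (1:ℝ) ≤ (2 * d * T) ^ (d - 1) := one_le_pow₀ (by nlinarith)
    have hTd : T ^ d = T ^ (d - 1) * T := by
      rw [← pow_succ]
      congr 1
      omega
    have hTpow : (2 * d * T) ^ (d - 1) = (2*d)^(d-1) * T ^ (d-1) := by
      rw [mul_pow]
    -- T / (Δ + 1) = (2d)^d
    have hTdiv : T = (2 * (d:ℝ)) ^ d * (Δ + 1) := by rw [hTdef, TT]
    -- T^d / Δ ≥ T^(d-1) * (2d)^d  > 4 * (2dT)^(d-1) ≥ (T*d+2)^(d-1)+1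
    have h2d : ((2:ℝ) * d) ^ d = (2*d)^(d-1) * (2*d) := by
      rw [← pow_succ]
      congr 1
      omega
    have hkey : T ^ d / Δ ≥ T ^ (d-1) * ((2*d)^(d-1) * (2*d)) := by
      rw [← h2d, hTd]
      rw [ge_iff_le, le_div_iff₀ hΔ]
      calc T ^ (d-1) * (2*(d:ℝ))^d * Δ ≤ T ^ (d-1) * ((2*(d:ℝ))^d * (Δ+1)) := by
            rw [mul_assoc]
            apply mul_le_mul_of_nonneg_left _ (by positivity)
            nlinarith [pow_pos (by linarith : (0:ℝ) < 2*(d:ℝ)) d]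
        _ = T ^ (d-1) * T := by rw [← hTdiv]
    have hfour : T ^ (d-1) * ((2*d)^(d-1) * (2*(d:ℝ))) ≥ 4 * ((2*d*T) ^ (d-1)) := by
      rw [hTpow]
      have : (4:ℝ) ≤ 2 * d := by linarith
      nlinarith [pow_pos hT0 (d-1), pow_pos (by linarith : (0:ℝ) < 2*(d:ℝ)) (d-1),
        mul_pos (pow_pos (by linarith : (0:ℝ) < 2*(d:ℝ)) (d-1)) (pow_pos hT0 (d-1))]
    nlinarith
  -- the set s = M⁻¹ (box)
  set box : Set (Fin d → ℝ) := Set.univ.pi fun _ => Set.Icc (0:ℝ) T with hbox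
  have hbox_meas : MeasurableSet box := MeasurableSet.univ_pi fun _ => measurableSet_Icc
  have hvol_box : volume box = ENNReal.ofReal (T ^ d) := by
    rw [hbox, volume_pi_pi]
    simp only [Real.volume_Icc, sub_zero]
    rw [Finset.prod_const, Finset.card_univ, Fintype.card_fin, ← ENNReal.ofReal_pow hT0.le]
  set f : (Fin d → ℝ) →ₗ[ℝ] (Fin d → ℝ) := Matrix.toLin' M with hf
  have hfdet : LinearMap.det f ≠ 0 := by
    rw [hf, LinearMap.det_toLin']
    exact hdet0
  set s : Set (Fin d → ℝ) := f ⁻¹' box with hsdef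
  have hs_meas : MeasurableSet s :=
    hbox_meas.preimage (LinearMap.continuous_of_finiteDimensional f).measurable
  have hvol_s : volume s = ENNReal.ofReal (T ^ d / Δ) := by
    rw [hsdef, Measure.addHaar_preimage_linearMap volume hfdet box, hvol_box,
      ← ENNReal.ofReal_mul (by positivity), hf, LinearMap.det_toLin']
    congr 1
    rw [abs_inv, hdet]
    ring
  have hNlt : (N : ENNReal) < volume s := by
    rw [hvol_s, ← ENNReal.ofReal_natCast]
    exact ENNReal.ofReal_lt_ofReal_iff_of_nonneg (by positivity) |>.2 hnum
  obtain ⟨y, Q, hQcard, hQmem⟩ := blichfeldt s hs_meas N hNlt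
  set pt : (Fin d → ℤ) → (Fin d → ℝ) := fun m => M.mulVec (fun j => (m j : ℝ)) with hpt
  -- coordinates of points
  have hQbox : ∀ m ∈ Q, ∀ i, -(M.mulVec y i) ≤ pt m i ∧ pt m i ≤ -(M.mulVec y i) + T := by
    intro m hm i
    have := hQmem m hm
    rw [hsdef, Set.mem_preimage, hf] at this
    rw [Matrix.toLin'_apply] at this
    have hcoord := (Set.mem_univ_pi.1 (by exact this)) i
    rw [Set.mem_Icc] at hcoord
    have hadd : (fun i => y i + (m i:ℝ)) = y + fun j => (m j : ℝ) := by
      funext i; rfl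
    rw [hadd, Matrix.mulVec_add] at hcoord
    have : M.mulVec y i + pt m i ∈ Set.Icc (0:ℝ) T := by
      rw [Set.mem_Icc]; exact hcoord
    rw [Set.mem_Icc] at this
    constructor <;> [linarith [this.1]; linarith [this.2]]
  -- separation of distinct points
  have hQsep : ∀ m ∈ Q, ∀ m' ∈ Q, m ≠ m' → ∃ i, 1 ≤ |pt m i - pt m' i| := by
    intro m hm m' hm' hne
    obtain ⟨i, hi⟩ := hsep (m - m') (sub_ne_zero.2 hne)
    refine ⟨i, ?_⟩
    have hcast : (fun j => (((m - m') j : ℤ) : ℝ)) = (fun j => (m j : ℝ)) - fun j => (m' j : ℝ) := by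
      funext j; push_cast [Pi.sub_apply]; ring
    rw [hcast, Matrix.mulVec_sub] at hi
    exact hi
  -- injectivity of pt on Q
  have hQinj : ∀ m ∈ Q, ∀ m' ∈ Q, pt m = pt m' → m = m' := by
    intro m hm m' hm' heq
    by_contra hne
    obtain ⟨i, hi⟩ := hQsep m hm m' hm' hne
    rw [heq] at hi
    simp only [sub_self, Pi.zero_apply, abs_zero] at hi
    linarith
  obtain ⟨m₀, hm₀⟩ : ∃ m₀, m₀ ∈ Q := Finset.card_pos.1 (by omega)
  set VV : Set (Fin d → ℝ) := (fun m : Fin d → ℤ => pt (m - m₀)) '' (Q : Set (Fin d → ℤ))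
    with hVV
  have hptsub : ∀ m : Fin d → ℤ, pt (m - m₀) = pt m - pt m₀ := by
    intro m
    rw [hpt]
    have hcast : (fun j => (((m - m₀) j : ℤ) : ℝ)) = (fun j => (m j : ℝ)) - fun j => (m₀ j : ℝ) := by
      funext j; push_cast [Pi.sub_apply]; ring
    simp only [hcast, Matrix.mulVec_sub]
  have hVVbound : ∀ v ∈ VV, ∀ i, |v i| ≤ T := by
    rintro v ⟨m, hm, rfl⟩ i
    show |pt (m - m₀) i| ≤ T
    rw [hptsub]
    have h1 := hQbox m hm i
    have h2 := hQbox m₀ hm₀ i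
    rw [Pi.sub_apply, abs_le]
    constructor <;> [linarith [h1.1, h2.2]; linarith [h1.2, h2.1]]
  have hVVfin : VV.Finite := (Q.finite_toSet).image _
  -- span is everything
  have hspan : Submodule.span ℝ VV = ⊤ := by
    by_contra hlt
    obtain ⟨φ, hφne, hφbot⟩ :=
      Submodule.exists_dual_map_eq_bot_of_lt_top (lt_top_iff_ne_top.2 hlt) inferInstance
    set n : Fin d → ℝ := fun i => φ (fun j => if i = j then 1 else 0) with hn
    have hφx : ∀ x : Fin d → ℝ, φ x = ∑ i, n i * x i := by
      intro x
      rw [LinearMap.pi_apply_eq_sum_univ φ x]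
      refine Finset.sum_congr rfl fun i _ => ?_
      rw [smul_eq_mul, mul_comm]
    have hnne : n ≠ 0 := by
      intro hn0
      exact hφne (LinearMap.ext fun x => by rw [hφx, hn0]; simp)
    have hφVV : ∀ v ∈ VV, φ v = 0 := by
      intro v hv
      have : φ v ∈ Submodule.map φ (Submodule.span ℝ VV) :=
        Submodule.mem_map_of_mem (Submodule.subset_span hv)
      rw [hφbot] at this
      exact (Submodule.mem_bot ℝ).1 this
    have hplane : ∀ m ∈ Q, ∑ i, n i * pt m i = ∑ i, n i * pt m₀ i := by
      intro m hm
      have h0 : φ (pt (m - m₀)) = 0 := hφVV _ ⟨m, hm, rfl⟩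
      rw [hptsub, map_sub, hφx, hφx] at h0
      linarith
    -- apply capacity to the image
    set S : Finset (Fin d → ℝ) := Q.image pt with hS
    have hScard : S.card = N + 1 := by
      rw [hS, Finset.card_image_of_injOn (fun m hm m' hm' => hQinj m hm m' hm'), hQcard]
    have hcap := capacity (by omega) T hT1 (fun i => -(M.mulVec y i)) hnne
      (∑ i, n i * pt m₀ i) S ?_ ?_ ?_
    · rw [hScard] at hcap
      have hNle : (T * ↑d + 2) ^ (d - 1) ≤ (N:ℝ) := Nat.le_ceil _
      push_cast at hcap
      linarith
    · rintro p hp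
      obtain ⟨m, hm, rfl⟩ := Finset.mem_image.1 hp
      exact hQbox m hm
    · rintro p hp q hq hpq
      obtain ⟨m, hm, rfl⟩ := Finset.mem_image.1 hp
      obtain ⟨m', hm', rfl⟩ := Finset.mem_image.1 hq
      refine hQsep m hm m' hm' fun hc => hpq ?_
      rw [hc]
    · rintro p hp
      obtain ⟨m, hm, rfl⟩ := Finset.mem_image.1 hp
      exact hplane m hm
  -- extract a basis from VV
  obtain ⟨bset, hbsub, hbspan, hbli⟩ := exists_linearIndependent ℝ VV
  rw [hspan] at hbspan
  haveI : Fintype bset := (hVVfin.subset hbsub).fintype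
  let B : Module.Basis bset ℝ (Fin d → ℝ) := Module.Basis.mk hbli (by rw [Subtype.range_coe, hbspan])
  have hcard : Fintype.card bset = d := by
    have h1 := Module.finrank_eq_card_basis B
    rw [Module.finrank_fin_fun] at h1
    omega
  let e : Fin d ≃ bset := (Fintype.equivFinOfCardEq hcard).symm
  have hmem : ∀ k : Fin d, ((e k : (Fin d → ℝ))) ∈ VV := fun k => hbsub (e k).2
  have hex : ∀ k : Fin d, ∃ m : Fin d → ℤ, pt m = (e k : (Fin d → ℝ)) := by
    intro k
    obtain ⟨m, _, hm2⟩ := hmem k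
    exact ⟨m - m₀, hm2⟩
  choose u hu using hex
  refine ⟨u, ?_, ?_⟩
  · have : (fun k => M.mulVec (fun j => ((u k j : ℝ)))) = fun k => (e k : (Fin d → ℝ)) := by
      funext k
      exact hu k
    rw [this]
    exact hbli.comp e (e.injective)
  · intro k i
    have hb := hVVbound _ (hmem k) i
    rw [← hu k] at hb
    exact hb

lemma one_le_TT (hd : 2 ≤ d) {Δ : ℝ} (hΔ : 0 < Δ) : 1 ≤ TT d Δ := by
  have hdR : (2:ℝ) ≤ (d:ℝ) := by exact_mod_cast hd
  rw [TT]
  have h1 : (1:ℝ) ≤ (2 * (d:ℝ)) ^ d := one_le_pow₀ (by linarith)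
  nlinarith

lemma covering (hd : 2 ≤ d) (M : Matrix (Fin d) (Fin d) ℝ) {Δ : ℝ} (hΔ : 0 < Δ)
    (hdet : |M.det| = Δ)
    (hsep : ∀ m : Fin d → ℤ, m ≠ 0 → ∃ i, 1 ≤ |M.mulVec (fun j => (m j : ℝ)) i|)
    (t : Fin d → ℝ) :
    ∃ m : Fin d → ℤ, ∀ i,
      |(Mᵀ)⁻¹.mulVec (fun j => (m j : ℝ)) i - t i| ≤ d * Bw d Δ / 2 := by
  classical
  obtain ⟨u, hli, hbound⟩ := exists_indep hd M hΔ hdet hsep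
  set T : ℝ := TT d Δ with hTdef
  have hT1 : 1 ≤ T := one_le_TT hd hΔ
  have hT0 : (0:ℝ) < T := by linarith
  have hdet0 : M.det ≠ 0 := fun h => hΔ.ne' (by rw [← hdet, h, abs_zero])
  set Nmat : Matrix (Fin d) (Fin d) ℤ := Matrix.of fun i k => u k i with hNmat
  set Nc : Matrix (Fin d) (Fin d) ℝ := Nmat.map Int.cast with hNc
  set P : Matrix (Fin d) (Fin d) ℝ := M * Nc with hP
  have hPcol : ∀ k, (fun i => P i k) = M.mulVec (fun j => ((u k j : ℝ))) := by
    intro k; funext i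
    simp [hP, hNc, hNmat, Matrix.mul_apply, Matrix.mulVec, dotProduct]
  have hPdet : P.det ≠ 0 := by
    intro hdet0'
    obtain ⟨v, hvne, hv0⟩ := Matrix.exists_mulVec_eq_zero_iff.2 hdet0'
    have hsum : P.mulVec v = ∑ k, v k • (fun i => P i k) := by
      funext i
      rw [Finset.sum_apply]
      simp only [Matrix.mulVec, dotProduct, Pi.smul_apply, smul_eq_mul]
      exact Finset.sum_congr rfl fun k _ => by ring
    simp_rw [hPcol] at hsum
    have hz : ∑ k, v k • M.mulVec (fun j => ((u k j : ℝ))) = 0 := by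
      rw [← hsum, hv0]
    have := Fintype.linearIndependent_iff.1 hli v hz
    exact hvne (funext this)
  have hNcdet : Nc.det ≠ 0 := by
    intro h
    rw [hP, Matrix.det_mul, h, mul_zero] at hPdet
    exact hPdet rfl
  set W : Matrix (Fin d) (Fin d) ℝ := (Mᵀ)⁻¹ * (Nc.adjugate)ᵀ with hW
  have hMTdet : (Mᵀ).det ≠ 0 := by rw [Matrix.det_transpose]; exact hdet0
  have hadjMT : (Mᵀ).adjugate = (Mᵀ).det • (Mᵀ)⁻¹ := by
    rw [Matrix.inv_def, smul_smul, Ring.inverse_eq_inv, mul_inv_cancel₀ hMTdet, one_smul]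
  have hPT : Pᵀ = Ncᵀ * Mᵀ := by rw [hP, Matrix.transpose_mul]
  have hadj : (Pᵀ).adjugate = M.det • W := by
    rw [hPT, Matrix.adjugate_mul_distrib, hadjMT, ← Matrix.adjugate_transpose,
      Matrix.smul_mul, hW, Matrix.det_transpose]
  -- entry bounds
  have hPentry : ∀ i k, |P i k| ≤ T := by
    intro i k
    have := hbound k i
    rw [← hPcol k] at this
    exact this
  have hadjbound : ∀ i k, |(Pᵀ).adjugate i k| ≤ (Nat.factorial d : ℝ) * T ^ d := by
    intro i k
    rw [Matrix.adjugate_apply]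
    refine abs_det_le _ T hT0.le fun a b => ?_
    rw [Matrix.updateRow_apply]
    by_cases hak : a = k
    · simp only [hak, if_true]
      by_cases hbi : b = i
      · simp [Pi.single_apply, hbi]; linarith
      · simp [Pi.single_apply, hbi]; linarith
    · simp only [hak, if_false]
      rw [Matrix.transpose_apply]
      exact hPentry b a
  have hWentry : ∀ i k, |W i k| ≤ (Nat.factorial d : ℝ) * T ^ d / Δ := by
    intro i k
    have h1 : (Pᵀ).adjugate i k = M.det * W i k := by
      rw [hadj, Matrix.smul_apply, smul_eq_mul]
    have h2 : |M.det| * |W i k| ≤ (Nat.factorial d : ℝ) * T ^ d := by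
      rw [← abs_mul, ← h1]; exact hadjbound i k
    rw [hdet] at h2
    rw [le_div_iff₀ hΔ]
    linarith [h2]
  -- W invertible
  have hWdet : W.det ≠ 0 := by
    have h1 : ((Pᵀ).adjugate).det = (M.det) ^ d * W.det := by
      rw [hadj, Matrix.det_smul, Fintype.card_fin]
    have h2 : ((Pᵀ).adjugate).det = (Pᵀ).det ^ (d - 1) := by
      rw [Matrix.det_adjugate, Fintype.card_fin]
    have h3 : (Pᵀ).det ≠ 0 := by rw [Matrix.det_transpose]; exact hPdet
    intro hw0
    rw [hw0, mul_zero] at h1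
    rw [h1] at h2
    exact pow_ne_zero _ h3 h2.symm
  have hWunit : IsUnit W.det := Ne.isUnit hWdet
  set c : Fin d → ℝ := W⁻¹.mulVec t with hc
  set mh : Fin d → ℤ := fun k => round (c k) with hmh
  have hWc : W.mulVec c = t := by
    rw [hc, Matrix.mulVec_mulVec, Matrix.mul_nonsing_inv _ hWunit, Matrix.one_mulVec]
  set m : Fin d → ℤ := (Nmat.adjugate)ᵀ.mulVec mh with hm
  have hadjcast : ∀ a b, ((Nmat.adjugate a b : ℤ) : ℝ) = Nc.adjugate a b := by
    intro a b
    have h := RingHom.map_adjugate (Int.castRingHom ℝ) Nmat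
    have h2 := congrFun (congrFun (congrArg (fun (X : Matrix (Fin d) (Fin d) ℝ) => X) h) a) b
    simpa [RingHom.mapMatrix_apply, Matrix.map_apply, hNc] using h2
  have hcast : (fun j => ((m j : ℤ) : ℝ)) = ((Nc.adjugate)ᵀ).mulVec (fun k => ((mh k : ℝ))) := by
    funext j
    rw [hm]
    simp only [Matrix.mulVec, dotProduct, Matrix.transpose_apply]
    push_cast
    exact Finset.sum_congr rfl fun k _ => by rw [hadjcast]
  have hkey : (Mᵀ)⁻¹.mulVec (fun j => ((m j : ℤ) : ℝ)) = W.mulVec (fun k => ((mh k : ℝ))) := by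
    rw [hcast, Matrix.mulVec_mulVec, hW]
  refine ⟨m, fun i => ?_⟩
  have hgoal : (Mᵀ)⁻¹.mulVec (fun j => ((m j : ℤ) : ℝ)) i = W.mulVec (fun k => ((mh k : ℝ))) i :=
    congrFun hkey i
  rw [hgoal]
  have hdiffeq : W.mulVec (fun k => ((mh k : ℝ))) i - t i = ∑ k, W i k * ((mh k : ℝ) - c k) := by
    conv_lhs => rw [← hWc]
    simp only [Matrix.mulVec, dotProduct]
    rw [← Finset.sum_sub_distrib]
    exact Finset.sum_congr rfl fun k _ => by ring
  rw [hdiffeq]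
  refine (Finset.abs_sum_le_sum_abs _ _).trans ?_
  have hterm : ∀ k, |W i k * ((mh k : ℝ) - c k)| ≤ ((Nat.factorial d : ℝ) * T ^ d / Δ) * (1/2) := by
    intro k
    rw [abs_mul]
    refine mul_le_mul (hWentry i k) ?_ (abs_nonneg _) (by positivity)
    rw [hmh, abs_sub_comm]
    exact abs_sub_round (c k)
  calc ∑ k, |W i k * ((mh k : ℝ) - c k)|
      ≤ ∑ _k : Fin d, ((Nat.factorial d : ℝ) * T ^ d / Δ) * (1/2) :=
        Finset.sum_le_sum fun k _ => hterm k
    _ = d * (((Nat.factorial d : ℝ) * T ^ d / Δ) * (1/2)) := by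
        rw [Finset.sum_const, Finset.card_univ, Fintype.card_fin, nsmul_eq_mul]
    _ = d * Bw d Δ / 2 := by rw [Bw, ← hTdef]; ring

end FrolovAux

open FrolovAux

/-- Let `d ≥ 2` and let `A` be an invertible `d×d` real matrix whose lattice `{Am : m ∈ ℤ^d}`
satisfies the Frolov properties:
(1°) `|∏_j (Am)_j| ≥ 1` for all `m ≠ 0`;
(2°) every axis-parallel parallelepiped contains at most `vol + 1` lattice points.
Then there is a constant `C(A,d) > 0` such that for all `a > 1` the dispersion of the Frolov
point set `F(a,A) = {a⁻¹(A⁻¹)ᵀ m : m ∈ ℤ^d} ∩ [0,1]^d` satisfies `disp(F(a,A)) ≤ C(A,d) a^{-d}`,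
i.e. every axis-parallel box `[x,y) ⊆ [0,1)^d` containing no point of `F(a,A)` has volume at
most `C(A,d) a^{-d}`. -/
theorem frolov_dispersion (d : ℕ) (hd : 2 ≤ d) (A : Matrix (Fin d) (Fin d) ℝ)
    (hA : IsUnit A.det)
    (h1 : ∀ m : Fin d → ℤ, m ≠ 0 → 1 ≤ |∏ j, A.mulVec (fun i => (m i : ℝ)) j|)
    (h2 : ∀ x y : Fin d → ℝ, (∀ j, x j ≤ y j) →
      {m : Fin d → ℤ | ∀ j, A.mulVec (fun i => (m i : ℝ)) j ∈ Set.Icc (x j) (y j)}.Finite ∧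
      ({m : Fin d → ℤ | ∀ j, A.mulVec (fun i => (m i : ℝ)) j ∈ Set.Icc (x j) (y j)}.ncard : ℝ)
        ≤ ∏ j, (y j - x j) + 1) :
    ∃ C : ℝ, 0 < C ∧ ∀ a : ℝ, 1 < a → ∀ x y : Fin d → ℝ,
      (∀ j, 0 ≤ x j) → (∀ j, x j < y j) → (∀ j, y j ≤ 1) →
      (∀ m : Fin d → ℤ,
        (∀ j, a⁻¹ * (A⁻¹)ᵀ.mulVec (fun i => (m i : ℝ)) j ∈ Set.Icc (0 : ℝ) 1) →
        ¬ (∀ j, a⁻¹ * (A⁻¹)ᵀ.mulVec (fun i => (m i : ℝ)) j ∈ Set.Ico (x j) (y j))) →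
      ∏ j, (y j - x j) ≤ C / a ^ d := by
  classical
  have hdR : (2:ℝ) ≤ (d:ℝ) := by exact_mod_cast hd
  have hdet0 : A.det ≠ 0 := hA.ne_zero
  set Δ : ℝ := |A.det| with hΔdef
  have hΔ : 0 < Δ := abs_pos.2 hdet0
  have hT1 : 1 ≤ TT d Δ := one_le_TT hd hΔ
  have hBw0 : 0 < Bw d Δ := by
    rw [Bw]
    have hf : (0:ℝ) < (Nat.factorial d : ℝ) := by
      exact_mod_cast Nat.factorial_pos d
    have hTpow : (0:ℝ) < TT d Δ ^ d := pow_pos (by linarith) d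
    exact div_pos (mul_pos hf hTpow) hΔ
  set ℓ : ℝ := d * Bw d Δ + 3 with hℓdef
  have hℓ3 : 3 ≤ ℓ := by
    rw [hℓdef]
    have : (0:ℝ) ≤ d * Bw d Δ := by positivity
    linarith
  have hℓ0 : 0 < ℓ := by linarith
  refine ⟨ℓ ^ d, by positivity, ?_⟩
  intro a ha x y hx hxy hy hempty
  by_contra hcon
  push_neg at hcon
  have ha0 : (0:ℝ) < a := by linarith
  have hprodpos : 0 < ∏ j, (y j - x j) :=
    Finset.prod_pos fun j _ => sub_pos.2 (hxy j)
  set r : ℝ := ℓ ^ d / (a ^ d * ∏ j, (y j - x j)) with hr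
  have hr0 : 0 < r := by positivity
  have hr1 : r < 1 := by
    rw [hr, div_lt_one (by positivity)]
    calc ℓ ^ d = (ℓ ^ d / a ^ d) * a ^ d := by field_simp
      _ < (∏ j, (y j - x j)) * a ^ d :=
          mul_lt_mul_of_pos_right hcon (by positivity)
      _ = a ^ d * ∏ j, (y j - x j) := mul_comm _ _
  set j₀ : Fin d := ⟨0, by omega⟩ with hj₀
  set y' : Fin d → ℝ := Function.update y j₀ (x j₀ + (y j₀ - x j₀) * r) with hy'
  have hy'lt : ∀ j, x j < y' j := by
    intro j
    rw [hy']
    by_cases hj : j = j₀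
    · subst hj
      rw [Function.update_self]
      nlinarith [hxy j₀, hr0, hr1]
    · rw [Function.update_of_ne hj]
      exact hxy j
  have hy'le : ∀ j, y' j ≤ y j := by
    intro j
    rw [hy']
    by_cases hj : j = j₀
    · subst hj
      rw [Function.update_self]
      nlinarith [hxy j₀, hr0, hr1]
    · rw [Function.update_of_ne hj]
  have horig : ∏ j, (y j - x j)
      = (y j₀ - x j₀) * ∏ j ∈ Finset.univ.erase j₀, (y j - x j) :=
    (Finset.mul_prod_erase _ _ (Finset.mem_univ j₀)).symm
  have hprod' : a ^ d * ∏ j, (y' j - x j) = ℓ ^ d := by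
    have hupdate : (fun j => y' j - x j)
        = Function.update (fun j => y j - x j) j₀ ((y j₀ - x j₀) * r) := by
      funext j
      rw [hy']
      by_cases hj : j = j₀
      · subst hj; rw [Function.update_self, Function.update_self]; ring
      · rw [Function.update_of_ne hj, Function.update_of_ne hj]
    have herase : ∀ j ∈ Finset.univ.erase j₀,
        Function.update (fun j => y j - x j) j₀ ((y j₀ - x j₀) * r) j = y j - x j := by
      intro j hj
      rw [Function.update_of_ne (Finset.ne_of_mem_erase hj)]
    calc a ^ d * ∏ j, (y' j - x j)
        = a ^ d * (((y j₀ - x j₀) * r)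
          * ∏ j ∈ Finset.univ.erase j₀, (y j - x j)) := by
          rw [hupdate, ← Finset.mul_prod_erase _ _ (Finset.mem_univ j₀),
            Function.update_self]
          congr 1
          congr 1
          exact Finset.prod_congr rfl herase
      _ = r * (a ^ d * ((y j₀ - x j₀) * ∏ j ∈ Finset.univ.erase j₀, (y j - x j))) := by
          ring
      _ = r * (a ^ d * ∏ j, (y j - x j)) := by rw [← horig]
      _ = ℓ ^ d := by
          rw [hr]
          field_simp
  set dd : Fin d → ℝ := fun j => a * (y' j - x j) / ℓ with hdd
  have hdd0 : ∀ j, 0 < dd j := by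
    intro j
    have h' : 0 < y' j - x j := sub_pos.2 (hy'lt j)
    rw [hdd]
    positivity
  have hddprod : ∏ j, dd j = 1 := by
    rw [hdd, Finset.prod_div_distrib, Finset.prod_mul_distrib, Finset.prod_const,
      Finset.prod_const, Finset.card_univ, Fintype.card_fin, hprod']
    exact div_self (by positivity)
  set M : Matrix (Fin d) (Fin d) ℝ := Matrix.of fun i j => dd i * A i j with hM
  have hMmulVec : ∀ (v : Fin d → ℝ) i, M.mulVec v i = dd i * A.mulVec v i := by
    intro v i
    simp only [hM, Matrix.mulVec, dotProduct, Matrix.of_apply, Finset.mul_sum]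
    exact Finset.sum_congr rfl fun k _ => by ring
  have hMdet : |M.det| = Δ := by
    rw [hM, Matrix.det_mul_column, hddprod, one_mul]
  have hMsep : ∀ m : Fin d → ℤ, m ≠ 0 → ∃ i, 1 ≤ |M.mulVec (fun j => (m j : ℝ)) i| := by
    intro m hm
    by_contra hall
    push_neg at hall
    have hstep : ∀ i, |M.mulVec (fun j => (m j : ℝ)) i|
        = dd i * |A.mulVec (fun j => (m j : ℝ)) i| := by
      intro i
      rw [hMmulVec, abs_mul, abs_of_pos (hdd0 i)]
    have hprodeq : ∏ i, |M.mulVec (fun j => (m j : ℝ)) i|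
        = |∏ i, A.mulVec (fun j => (m j : ℝ)) i| := by
      calc ∏ i, |M.mulVec (fun j => (m j : ℝ)) i|
          = ∏ i, (dd i * |A.mulVec (fun j => (m j : ℝ)) i|) :=
            Finset.prod_congr rfl fun i _ => hstep i
        _ = (∏ i, dd i) * ∏ i, |A.mulVec (fun j => (m j : ℝ)) i| := Finset.prod_mul_distrib
        _ = ∏ i, |A.mulVec (fun j => (m j : ℝ)) i| := by rw [hddprod, one_mul]
        _ = |∏ i, A.mulVec (fun j => (m j : ℝ)) i| := (Finset.abs_prod _ _).symm
    have hge : (1:ℝ) ≤ ∏ i, |M.mulVec (fun j => (m j : ℝ)) i| := by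
      rw [hprodeq]; exact h1 m hm
    have hlt1 : ∏ i, |M.mulVec (fun j => (m j : ℝ)) i| < 1 := by
      calc ∏ i, |M.mulVec (fun j => (m j : ℝ)) i|
          = |M.mulVec (fun j => (m j : ℝ)) j₀|
            * ∏ i ∈ Finset.univ.erase j₀, |M.mulVec (fun j => (m j : ℝ)) i| :=
            (Finset.mul_prod_erase _ _ (Finset.mem_univ j₀)).symm
        _ ≤ |M.mulVec (fun j => (m j : ℝ)) j₀| * 1 := by
            refine mul_le_mul_of_nonneg_left ?_ (abs_nonneg _)
            exact Finset.prod_le_one (fun i _ => abs_nonneg _) (fun i _ => (hall i).le)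
        _ < 1 := by rw [mul_one]; exact hall j₀
    linarith
  obtain ⟨m, hmcov⟩ := covering hd M hΔ hMdet hMsep (fun i => a * x i / dd i + ℓ / 2)
  have hAA : A * A⁻¹ = 1 := Matrix.mul_nonsing_inv A hA
  have hleft : (Matrix.of fun i j => (A⁻¹)ᵀ i j / dd i) * Mᵀ = 1 := by
    ext i j
    rw [Matrix.mul_apply]
    have hterm : ∀ k, (Matrix.of fun i j => (A⁻¹)ᵀ i j / dd i) i k * Mᵀ k j
        = (dd j / dd i) * (A j k * (A⁻¹) k i) := by
      intro k
      simp only [Matrix.of_apply, Matrix.transpose_apply, hM]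
      field_simp
    rw [Finset.sum_congr rfl fun k _ => hterm k, ← Finset.mul_sum]
    have hsumAA : ∑ k, A j k * (A⁻¹) k i = (1 : Matrix (Fin d) (Fin d) ℝ) j i := by
      rw [← Matrix.mul_apply, hAA]
    rw [hsumAA]
    by_cases hij : i = j
    · rcases hij with rfl
      rw [Matrix.one_apply_eq, mul_one]
      exact div_self (hdd0 _).ne'
    · rw [Matrix.one_apply_ne (fun h => hij h.symm), Matrix.one_apply_ne hij, mul_zero]
  have hX : (Mᵀ)⁻¹ = Matrix.of fun i j => (A⁻¹)ᵀ i j / dd i := Matrix.inv_eq_left_inv hleft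
  have hMTmul : ∀ i, (Mᵀ)⁻¹.mulVec (fun j => (m j : ℝ)) i
      = (A⁻¹)ᵀ.mulVec (fun j => (m j : ℝ)) i / dd i := by
    intro i
    rw [hX]
    simp only [Matrix.mulVec, dotProduct, Matrix.of_apply]
    rw [Finset.sum_div]
    exact Finset.sum_congr rfl fun k _ => by ring
  clear_value M dd y' r j₀ ℓ Δ
  have hval : ∀ j, x j < a⁻¹ * (A⁻¹)ᵀ.mulVec (fun i => (m i : ℝ)) j
      ∧ a⁻¹ * (A⁻¹)ᵀ.mulVec (fun i => (m i : ℝ)) j < y' j := by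
    intro j
    have hcov := hmcov j
    rw [hMTmul j] at hcov
    rw [abs_le] at hcov
    have hddj := hdd0 j
    have hρℓ : d * Bw d Δ / 2 = ℓ / 2 - 3/2 := by rw [hℓdef]; ring
    have hlow : (3:ℝ)/2 * dd j ≤ (A⁻¹)ᵀ.mulVec (fun i => (m i : ℝ)) j - a * x j := by
      have hc1 := hcov.1
      rw [hρℓ] at hc1
      have h' : a * x j / dd j + 3/2
          ≤ (A⁻¹)ᵀ.mulVec (fun i => (m i : ℝ)) j / dd j := by linarith
      have h'' := mul_le_mul_of_nonneg_right h' hddj.le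
      rw [add_mul, div_mul_cancel₀ _ hddj.ne', div_mul_cancel₀ _ hddj.ne'] at h''
      linarith
    have hhigh : (A⁻¹)ᵀ.mulVec (fun i => (m i : ℝ)) j - a * x j ≤ (ℓ - 3/2) * dd j := by
      have hc2 := hcov.2
      rw [hρℓ] at hc2
      have h' : (A⁻¹)ᵀ.mulVec (fun i => (m i : ℝ)) j / dd j
          ≤ a * x j / dd j + (ℓ - 3/2) := by linarith
      have h'' := mul_le_mul_of_nonneg_right h' hddj.le
      rw [add_mul, div_mul_cancel₀ _ hddj.ne', div_mul_cancel₀ _ hddj.ne'] at h''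
      linarith
    have hyy : ℓ * dd j = a * (y' j - x j) := by
      rw [hdd]
      field_simp
    have hpos32 : 0 < (3:ℝ)/2 * dd j := by positivity
    have h0lt : a * x j < (A⁻¹)ᵀ.mulVec (fun i => (m i : ℝ)) j := by linarith
    have hstep : (ℓ - 3/2) * dd j < ℓ * dd j :=
      mul_lt_mul_of_pos_right (by linarith) hddj
    have hlt2 : (A⁻¹)ᵀ.mulVec (fun i => (m i : ℝ)) j < a * y' j := by
      have hexp : a * (y' j - x j) = a * y' j - a * x j := by ring
      rw [hyy, hexp] at hstep
      linarith
    constructor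
    · rw [lt_inv_mul_iff₀ ha0]
      exact h0lt
    · rw [inv_mul_lt_iff₀ ha0]
      exact hlt2
  have hIcc : ∀ j, a⁻¹ * (A⁻¹)ᵀ.mulVec (fun i => (m i : ℝ)) j ∈ Set.Icc (0:ℝ) 1 := by
    intro j
    obtain ⟨hl, hr'⟩ := hval j
    refine ⟨le_trans (hx j) hl.le, ?_⟩
    exact le_trans hr'.le (le_trans (hy'le j) (hy j))
  refine hempty m hIcc fun j => ?_
  obtain ⟨hl, hr'⟩ := hval j
  exact ⟨hl.le, lt_of_lt_of_le hr' (hy'le j)⟩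
end

section
/- For every d ≥ 2 and every finite point set T = {ξ^1,…,ξ^m} ⊂ [0,1)^d one has disp(T) ≤ 2^d (D^2(T))^{1/2}. -/
open MeasureTheory

/-- The univariate hat function: `h_u(t) = 1 - |t|/u` for `|t| ≤ u`, `0` otherwise. -/
noncomputable def hatFn (u t : ℝ) : ℝ := if |t| ≤ u then 1 - |t| / u else 0

/-- The smooth hat function `h_B` of the box `B = ∏_j [x⁰_j - u_j, x⁰_j + u_j)`:
`h_B(x) = (∏_j u_j) · ∏_j h_{u_j}(x_j - x⁰_j)`. -/
noncomputable def hatBox {d : ℕ} (x0 u : Fin d → ℝ) (x : Fin d → ℝ) : ℝ :=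
  (∏ j, u j) * ∏ j, hatFn (u j) (x j - x0 j)

/-- The `2`-smooth discrepancy of the point set `ξ¹,…,ξ^m ⊂ [0,1)^d`:
`D²(T) = sup_{B = [x,y) ⊆ [0,1)^d} |∫ h_B - (1/m) Σ_μ h_B(ξ^μ)|`. -/
noncomputable def smoothDiscrepancy (d m : ℕ) (ξ : Fin m → (Fin d → ℝ)) : ℝ :=
  sSup {e : ℝ | ∃ x0 u : Fin d → ℝ, (∀ j, 0 < u j) ∧
    (∀ j, 0 ≤ x0 j - u j) ∧ (∀ j, x0 j + u j ≤ 1) ∧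
    e = |(∫ x : Fin d → ℝ, hatBox x0 u x) - (m : ℝ)⁻¹ * ∑ μ, hatBox x0 u (ξ μ)|}

lemma hatFn_nonneg {u : ℝ} (t : ℝ) : 0 ≤ hatFn u t := by
  unfold hatFn; split
  · have h : 0 ≤ |t| := abs_nonneg t
    rcases le_or_gt u 0 with hu | hu
    · have h0 : |t| = 0 := le_antisymm (by linarith) h
      simp [h0]
    · have : |t| / u ≤ 1 := by rw [div_le_one hu]; assumption
      linarith
  · exact le_refl 0

lemma hatFn_le_one {u : ℝ} (t : ℝ) : hatFn u t ≤ 1 := by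
  unfold hatFn; split
  · have h : 0 ≤ |t| := abs_nonneg t
    have : 0 ≤ |t| / u := by
      rcases le_or_gt u 0 with hu | hu
      · have h0 : |t| = 0 := le_antisymm (by linarith) h
        simp [h0]
      · exact div_nonneg h hu.le
    linarith
  · norm_num

lemma hatFn_eq_zero {u t : ℝ} (hu : 0 < u) (h : u ≤ |t|) : hatFn u t = 0 := by
  unfold hatFn; split
  · have : |t| = u := le_antisymm (by assumption) h
    rw [this, div_self hu.ne']; ring
  · rfl

lemma hatFn_eq_indicator {u : ℝ} :
    hatFn u = Set.indicator (Set.Icc (-u) u) (fun t => 1 - |t| / u) := by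
  ext t
  simp only [hatFn, Set.indicator, Set.mem_Icc, ← abs_le]

lemma integral_hatFn {u : ℝ} (hu : 0 < u) : ∫ t : ℝ, hatFn u t = u := by
  have hcont : Continuous (fun t : ℝ => 1 - |t| / u) := by continuity
  rw [hatFn_eq_indicator, integral_indicator measurableSet_Icc,
    integral_Icc_eq_integral_Ioc, ← intervalIntegral.integral_of_le (by linarith : -u ≤ u)]
  have hint : ∀ a b : ℝ, IntervalIntegrable (fun t : ℝ => 1 - |t| / u) volume a b :=
    fun a b => hcont.intervalIntegrable a b
  rw [← intervalIntegral.integral_add_adjacent_intervals (b := 0) (hint _ _) (hint _ _)]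
  have h1 : (∫ t in (-u)..(0:ℝ), (1 - |t| / u)) = ∫ t in (-u)..(0:ℝ), (1 + t / u) := by
    apply intervalIntegral.integral_congr
    intro t ht
    rw [Set.uIcc_of_le (by linarith : -u ≤ (0:ℝ))] at ht
    dsimp only
    rw [abs_of_nonpos ht.2]; ring
  have h2 : (∫ t in (0:ℝ)..u, (1 - |t| / u)) = ∫ t in (0:ℝ)..u, (1 - t / u) := by
    apply intervalIntegral.integral_congr
    intro t ht
    rw [Set.uIcc_of_le (by linarith : (0:ℝ) ≤ u)] at ht
    dsimp only
    rw [abs_of_nonneg ht.1]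
  have e1 : (∫ t in (-u)..(0:ℝ), (1 + t / u)) = u / 2 := by
    have : ∀ t : ℝ, HasDerivAt (fun s : ℝ => s + s ^ 2 / (2 * u)) (1 + t / u) t := by
      intro t
      have h := (hasDerivAt_id t).add ((hasDerivAt_pow 2 t).div_const (2 * u))
      exact h.congr_deriv (by field_simp; ring)
    rw [intervalIntegral.integral_eq_sub_of_hasDerivAt (fun t _ => this t)
      ((by continuity : Continuous fun t : ℝ => 1 + t / u).intervalIntegrable _ _)]
    field_simp; ring
  have e2 : (∫ t in (0:ℝ)..u, (1 - t / u)) = u / 2 := by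
    have : ∀ t : ℝ, HasDerivAt (fun s : ℝ => s - s ^ 2 / (2 * u)) (1 - t / u) t := by
      intro t
      have h := (hasDerivAt_id t).sub ((hasDerivAt_pow 2 t).div_const (2 * u))
      exact h.congr_deriv (by field_simp; ring)
    rw [intervalIntegral.integral_eq_sub_of_hasDerivAt (fun t _ => this t)
      ((by continuity : Continuous fun t : ℝ => 1 - t / u).intervalIntegrable _ _)]
    field_simp; ring
  rw [h1, h2, e1, e2]; ring

lemma integral_hatBox {d : ℕ} {x0 u : Fin d → ℝ} (hu : ∀ j, 0 < u j) :
    ∫ x : Fin d → ℝ, hatBox x0 u x = (∏ j, u j) ^ 2 := by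
  unfold hatBox
  rw [MeasureTheory.integral_const_mul,
    MeasureTheory.integral_fintype_prod_volume_eq_prod (ι := Fin d)
      (f := fun j (t : ℝ) => hatFn (u j) (t - x0 j))]
  have h : ∀ j, (∫ t : ℝ, hatFn (u j) (t - x0 j)) = u j := by
    intro j
    rw [integral_sub_right_eq_self (fun t => hatFn (u j) t) (x0 j), integral_hatFn (hu j)]
  rw [Finset.prod_congr rfl fun j _ => h j]; ring

lemma hatBox_nonneg {d : ℕ} {x0 u : Fin d → ℝ} (hu : ∀ j, 0 ≤ u j) (x : Fin d → ℝ) :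
    0 ≤ hatBox x0 u x :=
  mul_nonneg (Finset.prod_nonneg fun j _ => hu j)
    (Finset.prod_nonneg fun j _ => hatFn_nonneg _)

lemma hatBox_le {d : ℕ} {x0 u : Fin d → ℝ} (hu : ∀ j, 0 ≤ u j) (x : Fin d → ℝ) :
    hatBox x0 u x ≤ ∏ j, u j := by
  have h1 : (∏ j, hatFn (u j) (x j - x0 j)) ≤ 1 :=
    Finset.prod_le_one (fun j _ => hatFn_nonneg _) (fun j _ => hatFn_le_one _)
  calc hatBox x0 u x ≤ (∏ j, u j) * 1 :=
        mul_le_mul_of_nonneg_left h1 (Finset.prod_nonneg fun j _ => hu j)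
    _ = ∏ j, u j := mul_one _

lemma smoothDiscrepancy_bddAbove (d m : ℕ) (hm : 0 < m) (ξ : Fin m → (Fin d → ℝ)) :
    BddAbove {e : ℝ | ∃ x0 u : Fin d → ℝ, (∀ j, 0 < u j) ∧
      (∀ j, 0 ≤ x0 j - u j) ∧ (∀ j, x0 j + u j ≤ 1) ∧
      e = |(∫ x : Fin d → ℝ, hatBox x0 u x) - (m : ℝ)⁻¹ * ∑ μ, hatBox x0 u (ξ μ)|} := by
  refine ⟨1, ?_⟩
  rintro e ⟨x0, u, hu, hl, hr, rfl⟩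
  have hprod_nonneg : 0 ≤ ∏ j, u j := Finset.prod_nonneg fun j _ => (hu j).le
  have hprod_le : (∏ j, u j) ≤ 1 :=
    Finset.prod_le_one (fun j _ => (hu j).le)
      (fun j _ => by have := hl j; have := hr j; linarith)
  have hI : (∫ x : Fin d → ℝ, hatBox x0 u x) = (∏ j, u j) ^ 2 := integral_hatBox hu
  have hI1 : (∏ j, u j) ^ 2 ≤ 1 := by nlinarith
  have hI0 : 0 ≤ (∏ j, u j) ^ 2 := sq_nonneg _
  have hS0 : 0 ≤ (m : ℝ)⁻¹ * ∑ μ, hatBox x0 u (ξ μ) :=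
    mul_nonneg (by positivity)
      (Finset.sum_nonneg fun μ _ => hatBox_nonneg (fun j => (hu j).le) _)
  have hS1 : (m : ℝ)⁻¹ * ∑ μ, hatBox x0 u (ξ μ) ≤ 1 := by
    have hsum : (∑ μ, hatBox x0 u (ξ μ)) ≤ ∑ _μ : Fin m, (1 : ℝ) :=
      Finset.sum_le_sum fun μ _ =>
        le_trans (hatBox_le (fun j => (hu j).le) _) hprod_le
    have hm' : (0 : ℝ) < m := Nat.cast_pos.mpr hm
    rw [Finset.sum_const, Finset.card_univ, Fintype.card_fin, nsmul_eq_mul, mul_one] at hsum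
    calc (m : ℝ)⁻¹ * ∑ μ, hatBox x0 u (ξ μ) ≤ (m : ℝ)⁻¹ * m :=
          mul_le_mul_of_nonneg_left hsum (by positivity)
      _ = 1 := inv_mul_cancel₀ hm'.ne'
  rw [hI, abs_le]
  constructor <;> linarith

/-- For every `d ≥ 2` and every finite point set `T = {ξ¹,…,ξ^m} ⊂ [0,1)^d` one has
`disp(T) ≤ 2^d (D²(T))^{1/2}`: every axis-parallel box `[x,y) ⊆ [0,1)^d` containing no point
of `T` has volume at most `2^d √(D²(T))`. -/
theorem dispersion_le_smooth_discrepancy (d : ℕ) (hd : 2 ≤ d) (m : ℕ) (hm : 0 < m)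
    (ξ : Fin m → (Fin d → ℝ)) (hξ : ∀ μ j, 0 ≤ ξ μ j ∧ ξ μ j < 1) :
    ∀ x y : Fin d → ℝ, (∀ j, 0 ≤ x j) → (∀ j, x j < y j) → (∀ j, y j ≤ 1) →
      (∀ μ, ¬ (∀ j, ξ μ j ∈ Set.Ico (x j) (y j))) →
      ∏ j, (y j - x j) ≤ 2 ^ d * Real.sqrt (smoothDiscrepancy d m ξ) := by
  intro x y hx hxy hy hempty
  set u : Fin d → ℝ := fun j => (y j - x j) / 2 with hu_def
  set x0 : Fin d → ℝ := fun j => (x j + y j) / 2 with hx0_def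
  have hu : ∀ j, 0 < u j := fun j => by simp only [hu_def]; linarith [hxy j]
  have hprod_nonneg : 0 ≤ ∏ j, u j := Finset.prod_nonneg fun j _ => (hu j).le
  -- each hatBox x0 u (ξ μ) = 0
  have hzero : ∀ μ, hatBox x0 u (ξ μ) = 0 := by
    intro μ
    have h := hempty μ
    push_neg at h
    obtain ⟨j, hj⟩ := h
    have hj' : ξ μ j < x j ∨ y j ≤ ξ μ j := by
      by_contra hc
      push_neg at hc
      exact hj ⟨hc.1, hc.2⟩
    have habs : u j ≤ |ξ μ j - x0 j| := by
      rcases hj' with h' | h'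
      · rw [abs_of_nonpos (by simp only [hx0_def]; linarith [hxy j])]
        simp only [hu_def, hx0_def]; linarith
      · rw [abs_of_nonneg (by simp only [hx0_def]; linarith [hxy j])]
        simp only [hu_def, hx0_def]; linarith
    unfold hatBox
    rw [show (∏ j, hatFn (u j) (ξ μ j - x0 j)) = 0 from
      Finset.prod_eq_zero (Finset.mem_univ j) (hatFn_eq_zero (hu j) habs), mul_zero]
  -- the element of the sup set
  have hmem : (∏ j, u j) ^ 2 ∈ {e : ℝ | ∃ x0 u : Fin d → ℝ, (∀ j, 0 < u j) ∧
      (∀ j, 0 ≤ x0 j - u j) ∧ (∀ j, x0 j + u j ≤ 1) ∧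
      e = |(∫ x : Fin d → ℝ, hatBox x0 u x) - (m : ℝ)⁻¹ * ∑ μ, hatBox x0 u (ξ μ)|} := by
    refine ⟨x0, u, hu, ?_, ?_, ?_⟩
    · intro j; simp only [hu_def, hx0_def]; linarith [hx j]
    · intro j; simp only [hu_def, hx0_def]; linarith [hy j]
    · rw [integral_hatBox hu]
      rw [Finset.sum_congr rfl fun μ _ => hzero μ]
      simp [abs_of_nonneg (sq_nonneg (∏ j, u j))]
  have hle : (∏ j, u j) ^ 2 ≤ smoothDiscrepancy d m ξ :=
    le_csSup (smoothDiscrepancy_bddAbove d m hm ξ) hmem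
  have hsqrt : (∏ j, u j) ≤ Real.sqrt (smoothDiscrepancy d m ξ) := by
    calc (∏ j, u j) = Real.sqrt ((∏ j, u j) ^ 2) := (Real.sqrt_sq hprod_nonneg).symm
      _ ≤ _ := Real.sqrt_le_sqrt hle
  have hvol : (∏ j, (y j - x j)) = 2 ^ d * ∏ j, u j := by
    rw [Finset.prod_congr rfl (fun j _ => by simp only [hu_def]; ring :
      ∀ j ∈ Finset.univ, y j - x j = 2 * u j), Finset.prod_mul_distrib,
      Finset.prod_const, Finset.card_univ, Fintype.card_fin]
  rw [hvol]
  exact mul_le_mul_of_nonneg_left hsqrt (by positivity)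
end

section
/- For every d ≥ 2 and r ∈ ℕ there is a constant C(d) > 0 (depending only on d) such that for all v ∈ ℕ_0 and u ∈ ℝ_+^d: (I) if 2^v pr(u,d) ≥ 1 then σ^r(v,u) ≤ C(d) (log(2^{v+1} pr(u,d)))^{d-1} / (2^v pr(u,d))^{r/2}; and (II) if 2^v pr(u,d) ≤ 1 then σ^r(v,u) ≤ C(d) (2^v pr(u,d))^{r/2} (log(2/(2^v pr(u,d))))^{d-1}; here log denotes the logarithm to base 2. -/
open Finset Real

private lemma prod_rpow_eq {ι : Type*} (s : Finset ι) (g : ι → ℝ) :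
    ∏ i ∈ s, (2:ℝ) ^ (g i) = (2:ℝ) ^ (∑ i ∈ s, g i) := by
  induction s using Finset.cons_induction with
  | empty => simp
  | cons a s ha ih => rw [Finset.prod_cons, Finset.sum_cons, ih, Real.rpow_add two_pos]




private lemma sigma_aux_summable (e : ℕ) :
    Summable (fun n : ℕ => (4*(n:ℝ)+6)^e * (1/2:ℝ)^n) := by
  have h1 : Summable (fun n : ℕ => (10:ℝ)^e * ((n:ℝ)^e * (1/2:ℝ)^n) + (10:ℝ)^e * (1/2:ℝ)^n) := by
    exact ((summable_pow_mul_geometric_of_norm_lt_one (R := ℝ) e (r := 1/2) (by rw [Real.norm_eq_abs, abs_of_nonneg] <;> norm_num)).mul_left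
      _).add ((summable_geometric_of_lt_one (by norm_num) (by norm_num)).mul_left _)
  refine Summable.of_nonneg_of_le (fun n => by positivity) (fun n => ?_) h1
  have hp : (0:ℝ) < (1/2:ℝ)^n := by positivity
  have hb : (4*(n:ℝ)+6)^e ≤ (10:ℝ)^e * (n:ℝ)^e + (10:ℝ)^e := by
    rcases Nat.eq_zero_or_pos n with h | h
    · subst h
      simp only [Nat.cast_zero, mul_zero, zero_add]
      have : ((6:ℝ))^e ≤ (10:ℝ)^e := pow_le_pow_left₀ (by norm_num) (by norm_num) e
      have h0 : (0:ℝ) ≤ (10:ℝ)^e * (0:ℝ)^e := by positivity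
      linarith
    · have h1 : (1:ℝ) ≤ (n:ℝ) := by exact_mod_cast h
      have : (4*(n:ℝ)+6) ≤ 10*(n:ℝ) := by linarith
      calc (4*(n:ℝ)+6)^e ≤ (10*(n:ℝ))^e := pow_le_pow_left₀ (by positivity) this e
        _ = (10:ℝ)^e * (n:ℝ)^e := mul_pow _ _ _
        _ ≤ (10:ℝ)^e * (n:ℝ)^e + (10:ℝ)^e := le_add_of_nonneg_right (by positivity)
  calc (4*(n:ℝ)+6)^e * (1/2:ℝ)^n ≤ ((10:ℝ)^e * (n:ℝ)^e + (10:ℝ)^e) * (1/2:ℝ)^n :=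
        mul_le_mul_of_nonneg_right hb hp.le
    _ = (10:ℝ)^e * ((n:ℝ)^e * (1/2:ℝ)^n) + (10:ℝ)^e * (1/2:ℝ)^n := by ring

private lemma sigma_core (e : ℕ) : ∃ C : ℝ, 0 < C ∧ ∀ (v : ℕ) (a : Fin (e+1) → ℝ),
    ∑ s ∈ Finset.Nat.antidiagonalTuple (e+1) v,
      (2:ℝ) ^ (-(((∑ j, |(s j : ℝ) + a j|) - |(v:ℝ) + ∑ j, a j|) / 2))
      ≤ C * (1 + |(v:ℝ) + ∑ j, a j|) ^ e := by
  classical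
  set f : ℕ → ℝ := fun n => (4*(n:ℝ)+6)^e * (1/2:ℝ)^n with hf_def
  have hf0 : ∀ n, 0 ≤ f n := fun n => by positivity
  have hfs : Summable f := sigma_aux_summable e
  refine ⟨(∑' n, f n) + 1, by have : 0 ≤ ∑' n, f n := tsum_nonneg hf0; linarith, ?_⟩
  intro v a
  set L : ℝ := (v:ℝ) + ∑ j, a j with hL_def
  set A := Finset.Nat.antidiagonalTuple (e+1) v with hA_def
  set T : (Fin (e+1) → ℕ) → ℝ := fun s => ∑ j, |(s j : ℝ) + a j| with hT_def
  have hTge : ∀ s ∈ A, |L| ≤ T s := by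
    intro s hs
    have hsum : ∑ j, ((s j:ℝ) + a j) = L := by
      rw [Finset.sum_add_distrib, hL_def]
      congr 1
      rw [← Nat.cast_sum]
      exact_mod_cast Finset.Nat.mem_antidiagonalTuple.mp hs
    calc |L| = |∑ j, ((s j:ℝ) + a j)| := by rw [hsum]
      _ ≤ ∑ j, |(s j:ℝ) + a j| := Finset.abs_sum_le_sum_abs _ _
  set nf : (Fin (e+1) → ℕ) → ℕ := fun s => ⌊(T s - |L|)/2⌋₊ with hnf_def
  have key := Finset.sum_fiberwise_of_maps_to (t := A.image nf) (g := nf)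
    (fun x hx => Finset.mem_image_of_mem _ hx)
    (fun s => (2:ℝ) ^ (-((T s - |L|)/2)))
  rw [← key]
  have hfiber : ∀ n ∈ A.image nf,
      ∑ s ∈ A.filter (fun s => nf s = n), (2:ℝ) ^ (-((T s - |L|)/2))
        ≤ (1 + |L|)^e * f n := by
    intro n _
    set B : ℝ := |L| + 2*(n:ℝ) + 2 with hB_def
    have hB0 : (0:ℝ) < B := by positivity
    -- pointwise bound
    have hpt : ∀ s ∈ A.filter (fun s => nf s = n),
        (2:ℝ) ^ (-((T s - |L|)/2)) ≤ (1/2:ℝ)^n := by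
      intro s hs
      rw [Finset.mem_filter] at hs
      have hge : |L| ≤ T s := hTge s hs.1
      have hn : (n:ℝ) ≤ (T s - |L|)/2 := by
        rw [← hs.2]
        exact Nat.floor_le (by linarith)
      have : (2:ℝ) ^ (-((T s - |L|)/2)) ≤ (2:ℝ) ^ (-(n:ℝ)) :=
        Real.rpow_le_rpow_of_exponent_le one_le_two (by linarith)
      calc (2:ℝ) ^ (-((T s - |L|)/2)) ≤ (2:ℝ) ^ (-(n:ℝ)) := this
        _ = (1/2:ℝ)^n := by
            rw [Real.rpow_neg (by norm_num), Real.rpow_natCast, one_div, inv_pow]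
    -- cardinality bound
    set c : Fin e → ℤ := fun j => ⌈-a j.castSucc - B⌉ with hc_def
    set m : ℤ := ⌊2*B⌋ with hm_def
    have hm0 : 0 ≤ m := Int.le_floor.mpr (by push_cast; linarith)
    have hcard : (A.filter (fun s => nf s = n)).card ≤
        (Fintype.piFinset (fun j : Fin e => Finset.Icc (c j) (c j + m))).card := by
      apply Finset.card_le_card_of_injOn (fun s => fun j : Fin e => (s j.castSucc : ℤ))
      · intro s hs
        rw [Finset.mem_coe, Finset.mem_filter] at hs
        have hTB : T s < B := by
          have h1 : (T s - |L|)/2 < (n:ℝ) + 1 := by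
            rw [← hs.2]; exact Nat.lt_floor_add_one _
          rw [hB_def]; linarith
        rw [Finset.mem_coe, Fintype.mem_piFinset]
        intro j
        have habs : |(s j.castSucc : ℝ) + a j.castSucc| ≤ T s :=
          Finset.single_le_sum (f := fun i => |(s i : ℝ) + a i|)
            (fun i _ => abs_nonneg _) (Finset.mem_univ j.castSucc)
        have h1 : -B ≤ (s j.castSucc : ℝ) + a j.castSucc := by
          have := neg_abs_le ((s j.castSucc : ℝ) + a j.castSucc); linarith
        have h2 : (s j.castSucc : ℝ) + a j.castSucc ≤ B := by
          have := le_abs_self ((s j.castSucc : ℝ) + a j.castSucc); linarith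
        rw [Finset.mem_Icc]
        constructor
        · exact Int.ceil_le.mpr (by push_cast; linarith)
        · have hcj : -a j.castSucc - B ≤ (c j : ℝ) := Int.le_ceil _
          have : ((s j.castSucc : ℤ) : ℝ) ≤ (c j : ℝ) + 2*B := by push_cast; linarith
          have h3 : (s j.castSucc : ℤ) - c j ≤ m := Int.le_floor.mpr (by push_cast at this ⊢; linarith)
          linarith
      · intro s hs t ht hst
        simp only [Finset.coe_filter, Set.mem_setOf_eq] at hs ht
        have hsv : ∑ i, s i = v := Finset.Nat.mem_antidiagonalTuple.mp hs.1
        have htv : ∑ i, t i = v := Finset.Nat.mem_antidiagonalTuple.mp ht.1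
        have hcs : ∀ j : Fin e, s j.castSucc = t j.castSucc := by
          intro j
          exact_mod_cast (show ((s j.castSucc : ℤ)) = (t j.castSucc : ℤ) from congrFun hst j)
        funext i
        refine Fin.lastCases ?_ (fun j => hcs j) i
        have h1 : ∑ j : Fin e, s j.castSucc + s (Fin.last e) = v := by
          rw [← Fin.sum_univ_castSucc]; exact hsv
        have h2 : ∑ j : Fin e, t j.castSucc + t (Fin.last e) = v := by
          rw [← Fin.sum_univ_castSucc]; exact htv
        have h3 : ∑ j : Fin e, s j.castSucc = ∑ j : Fin e, t j.castSucc :=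
          Finset.sum_congr rfl (fun j _ => hcs j)
        omega
    have hcardval : ((Fintype.piFinset (fun j : Fin e => Finset.Icc (c j) (c j + m))).card : ℝ)
        ≤ (2*B+1)^e := by
      rw [Fintype.card_piFinset]
      have : ∀ j : Fin e, (Finset.Icc (c j) (c j + m)).card = (m+1).toNat := by
        intro j; rw [Int.card_Icc]; congr 1; ring
      rw [Finset.prod_congr rfl (fun j _ => this j), Finset.prod_const, Finset.card_univ,
        Fintype.card_fin]
      push_cast
      apply pow_le_pow_left₀ (by positivity)
      have h1 : ((m+1).toNat : ℝ) = (m:ℝ) + 1 := by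
        exact_mod_cast congrArg (Int.cast : ℤ → ℝ) (Int.toNat_of_nonneg (by omega))
      rw [h1]
      have := Int.floor_le (2*B)
      rw [← hm_def] at this
      linarith
    calc ∑ s ∈ A.filter (fun s => nf s = n), (2:ℝ) ^ (-((T s - |L|)/2))
        ≤ (A.filter (fun s => nf s = n)).card • ((1/2:ℝ)^n) :=
          Finset.sum_le_card_nsmul _ _ _ hpt
      _ = ((A.filter (fun s => nf s = n)).card : ℝ) * (1/2:ℝ)^n := by
          rw [nsmul_eq_mul]
      _ ≤ (2*B+1)^e * (1/2:ℝ)^n := by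
          apply mul_le_mul_of_nonneg_right _ (by positivity)
          exact le_trans (by exact_mod_cast hcard) hcardval
      _ ≤ (1 + |L|)^e * f n := by
          rw [hf_def]
          have h1 : (2*B+1)^e ≤ ((1+|L|) * (4*(n:ℝ)+6))^e := by
            apply pow_le_pow_left₀ (by positivity)
            rw [hB_def]
            have habs : (0:ℝ) ≤ |L| := abs_nonneg _
            nlinarith
          calc (2*B+1)^e * (1/2:ℝ)^n ≤ ((1+|L|) * (4*(n:ℝ)+6))^e * (1/2:ℝ)^n :=
                mul_le_mul_of_nonneg_right h1 (by positivity)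
            _ = (1+|L|)^e * ((4*(n:ℝ)+6)^e * (1/2:ℝ)^n) := by rw [mul_pow]; ring
  calc ∑ n ∈ A.image nf, ∑ s ∈ A.filter (fun s => nf s = n), (2:ℝ) ^ (-((T s - |L|)/2))
      ≤ ∑ n ∈ A.image nf, (1 + |L|)^e * f n := Finset.sum_le_sum hfiber
    _ = (1 + |L|)^e * ∑ n ∈ A.image nf, f n := by rw [Finset.mul_sum]
    _ ≤ (1 + |L|)^e * ∑' n, f n := by
        apply mul_le_mul_of_nonneg_left _ (by positivity)
        exact Summable.sum_le_tsum _ (fun i _ => hf0 i) hfs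
    _ ≤ ((∑' n, f n) + 1) * (1 + |L|)^e := by
        have h1 : (0:ℝ) ≤ (1+|L|)^e := by positivity
        have h2 : (0:ℝ) ≤ ∑' n, f n := tsum_nonneg hf0
        nlinarith




/-- For every `d ≥ 2` there is a constant `C(d) > 0` (depending only on `d`) such that for
every `r ∈ ℕ`, all `v ∈ ℕ₀` and `u ∈ ℝ₊^d`, with
`σ^r(v,u) = Σ_{‖s‖₁=v} ∏_j min((2^{s_j}u_j)^{r/2}, (2^{s_j}u_j)^{-r/2})`:
(I) if `2^v pr(u,d) ≥ 1` then
`σ^r(v,u) ≤ C(d) (log₂(2^{v+1} pr(u,d)))^{d-1} / (2^v pr(u,d))^{r/2}`;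
(II) if `2^v pr(u,d) ≤ 1` then
`σ^r(v,u) ≤ C(d) (2^v pr(u,d))^{r/2} (log₂(2/(2^v pr(u,d))))^{d-1}`. -/
theorem sigma_r_bound (d : ℕ) (hd : 2 ≤ d) :
    ∃ C : ℝ, 0 < C ∧ ∀ r : ℕ, 1 ≤ r → ∀ v : ℕ, ∀ u : Fin d → ℝ, (∀ j, 0 < u j) →
      (1 ≤ (2 : ℝ) ^ v * ∏ j, u j →
        ∑ s ∈ Finset.Nat.antidiagonalTuple d v,
            ∏ j, min (((2 : ℝ) ^ s j * u j) ^ ((r : ℝ) / 2))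
              ((((2 : ℝ) ^ s j * u j) ^ ((r : ℝ) / 2))⁻¹) ≤
          C * Real.logb 2 ((2 : ℝ) ^ (v + 1) * ∏ j, u j) ^ (d - 1) /
            ((2 : ℝ) ^ v * ∏ j, u j) ^ ((r : ℝ) / 2)) ∧
      ((2 : ℝ) ^ v * ∏ j, u j ≤ 1 →
        ∑ s ∈ Finset.Nat.antidiagonalTuple d v,
            ∏ j, min (((2 : ℝ) ^ s j * u j) ^ ((r : ℝ) / 2))
              ((((2 : ℝ) ^ s j * u j) ^ ((r : ℝ) / 2))⁻¹) ≤
          C * ((2 : ℝ) ^ v * ∏ j, u j) ^ ((r : ℝ) / 2) *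
            Real.logb 2 (2 / ((2 : ℝ) ^ v * ∏ j, u j)) ^ (d - 1)) := by
  obtain ⟨e, rfl⟩ : ∃ e, d = e + 1 := ⟨d - 1, by omega⟩
  obtain ⟨C, hC, hcore⟩ := sigma_core e
  refine ⟨C, hC, ?_⟩
  intro r hr v u hu

  classical
  set cc : ℝ := (r:ℝ)/2 with hcc_def
  have hcc : (1/2 : ℝ) ≤ cc := by
    rw [hcc_def]
    have : (1:ℝ) ≤ (r:ℝ) := by exact_mod_cast hr
    linarith
  set a : Fin (e+1) → ℝ := fun j => Real.logb 2 (u j) with ha_def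
  have hua : ∀ j, u j = (2:ℝ) ^ (a j) := fun j =>
    (Real.rpow_logb two_pos (by norm_num) (hu j)).symm
  set L : ℝ := (v:ℝ) + ∑ j, a j with hL_def
  set X : ℝ := (2:ℝ)^v * ∏ j, u j with hX_def
  have hprodpos : 0 < ∏ j, u j := Finset.prod_pos (fun j _ => hu j)
  have hX0 : 0 < X := by rw [hX_def]; positivity
  have hXL : X = (2:ℝ) ^ L := by
    rw [hX_def, hL_def, Real.rpow_add two_pos, Real.rpow_natCast]
    congr 1
    rw [← prod_rpow_eq]
    exact Finset.prod_congr rfl (fun j _ => hua j)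
  set T : (Fin (e+1) → ℕ) → ℝ := fun s => ∑ j, |(s j : ℝ) + a j| with hT_def
  set A := Finset.Nat.antidiagonalTuple (e+1) v with hA_def
  -- each term equals 2 ^ (-(cc * T s))
  have hterm : ∀ s : Fin (e+1) → ℕ,
      ∏ j, min (((2 : ℝ) ^ s j * u j) ^ ((r : ℝ) / 2))
          ((((2 : ℝ) ^ s j * u j) ^ ((r : ℝ) / 2))⁻¹)
        = (2:ℝ) ^ (-(cc * T s)) := by
    intro s
    have hj : ∀ j, min (((2 : ℝ) ^ s j * u j) ^ ((r : ℝ) / 2))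
        ((((2 : ℝ) ^ s j * u j) ^ ((r : ℝ) / 2))⁻¹)
        = (2:ℝ) ^ (-(cc * |(s j : ℝ) + a j|)) := by
      intro j
      have h1 : (2:ℝ)^ s j * u j = (2:ℝ) ^ ((s j : ℝ) + a j) := by
        rw [hua j, Real.rpow_add two_pos, Real.rpow_natCast]
      set w : ℝ := (s j : ℝ) + a j with hw_def
      have hmono : Monotone fun (y:ℝ) => (2:ℝ)^y :=
        fun y z h => Real.rpow_le_rpow_of_exponent_le one_le_two h
      rw [h1, ← Real.rpow_mul (by norm_num : (0:ℝ) ≤ 2), ← Real.rpow_neg (by norm_num : (0:ℝ) ≤ 2),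
        ← hmono.map_min]
      congr 1
      rw [← hcc_def]
      rcases le_total 0 w with h | h
      · rw [abs_of_nonneg h, min_eq_right (by nlinarith)]; ring
      · rw [abs_of_nonpos h, min_eq_left (by nlinarith)]; ring
    rw [Finset.prod_congr rfl (fun j _ => hj j), prod_rpow_eq]
    congr 1
    rw [hT_def, Finset.mul_sum, ← Finset.sum_neg_distrib]
  have hTge : ∀ s ∈ A, |L| ≤ T s := by
    intro s hs
    have hsum : ∑ j, ((s j:ℝ) + a j) = L := by
      rw [Finset.sum_add_distrib, hL_def]
      congr 1
      rw [← Nat.cast_sum]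
      exact_mod_cast Finset.Nat.mem_antidiagonalTuple.mp hs
    calc |L| = |∑ j, ((s j:ℝ) + a j)| := by rw [hsum]
      _ ≤ ∑ j, |(s j:ℝ) + a j| := Finset.abs_sum_le_sum_abs _ _
  -- main bound
  have hmain : ∑ s ∈ A, ∏ j, min (((2 : ℝ) ^ s j * u j) ^ ((r : ℝ) / 2))
          ((((2 : ℝ) ^ s j * u j) ^ ((r : ℝ) / 2))⁻¹)
      ≤ (2:ℝ) ^ (-(cc * |L|)) * (C * (1 + |L|) ^ e) := by
    calc ∑ s ∈ A, ∏ j, min (((2 : ℝ) ^ s j * u j) ^ ((r : ℝ) / 2))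
            ((((2 : ℝ) ^ s j * u j) ^ ((r : ℝ) / 2))⁻¹)
        = ∑ s ∈ A, (2:ℝ) ^ (-(cc * T s)) :=
          Finset.sum_congr rfl (fun s _ => hterm s)
      _ ≤ ∑ s ∈ A, (2:ℝ) ^ (-(cc * |L|)) * (2:ℝ) ^ (-((T s - |L|)/2)) := by
          apply Finset.sum_le_sum
          intro s hs
          rw [← Real.rpow_add two_pos]
          apply Real.rpow_le_rpow_of_exponent_le one_le_two
          have h1 : |L| ≤ T s := hTge s hs
          nlinarith
      _ = (2:ℝ) ^ (-(cc * |L|)) * ∑ s ∈ A, (2:ℝ) ^ (-((T s - |L|)/2)) := by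
          rw [Finset.mul_sum]
      _ ≤ (2:ℝ) ^ (-(cc * |L|)) * (C * (1 + |L|) ^ e) := by
          apply mul_le_mul_of_nonneg_left _ (by positivity)
          exact hcore v a
  have hLlogb : Real.logb 2 X = L := by rw [hXL]; exact Real.logb_rpow two_pos (by norm_num)
  have hXc : X ^ cc = (2:ℝ) ^ (L * cc) := by
    rw [hXL, ← Real.rpow_mul (by norm_num : (0:ℝ) ≤ 2)]
  constructor
  · intro h1X
    have hL0 : 0 ≤ L := by rw [← hLlogb]; exact Real.logb_nonneg one_lt_two h1X
    have hlog1 : Real.logb 2 ((2 : ℝ) ^ (v + 1) * ∏ j, u j) = 1 + L := by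
      have h2 : (2:ℝ)^(v+1) * ∏ j, u j = 2 * X := by rw [hX_def]; ring
      rw [h2, Real.logb_mul (by norm_num) (ne_of_gt hX0), hLlogb]
      norm_num
    rw [hlog1, Nat.add_sub_cancel, hXc]
    refine le_trans hmain (le_of_eq ?_)
    rw [abs_of_nonneg hL0, div_eq_mul_inv, ← Real.rpow_neg (by norm_num : (0:ℝ) ≤ 2)]
    rw [show -(L * cc) = -(cc * L) by ring]
    ring
  · intro h2X
    have hL0 : L ≤ 0 := by
      rw [← hLlogb]; exact Real.logb_nonpos one_lt_two hX0.le h2X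
    have hlog2 : Real.logb 2 (2 / X) = 1 - L := by
      rw [Real.logb_div (by norm_num) (ne_of_gt hX0), hLlogb]
      norm_num
    rw [hlog2, Nat.add_sub_cancel, hXc]
    refine le_trans hmain (le_of_eq ?_)
    rw [abs_of_nonpos hL0]
    rw [show -(cc * -L) = L * cc by ring]
    ring_nf
end
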